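/- arXiv:2110.06700 — 6 statements merged into one kernel-verified Lean document; each statement's English description precedes it below -/
import Mathlib

section
/- Let n, p be positive integers, σ ≠ 0 a real number, Ω a symmetric positive definite n×n real matrix, and V a symmetric invertible n×n real matrix with σ⁻¹Ω⁻¹ + V positive definite; let v ∈ ℝ^n, v̄ ∈ ℝ. Let A be an n×n matrix, B an n×p matrix, f̄ ∈ ℝ^n, and let l(δx,δu) = (1/2)·δxᵀ l_xx δx + δuᵀ l_ux δx + (1/2)·δuᵀ l_uu δu + l_xᵀδx + l_uᵀδu with l_xx, l_uu symmetric. Define M = (σΩ + V⁻¹)⁻¹, N = v − σMΩv, and Q_x = l_x + AᵀM f̄ + AᵀN, Q_u = l_u + BᵀN + BᵀM f̄, Q_uu = l_uu + BᵀMB, Q_ux = l_ux + BᵀMA, Q_xx = l_xx + AᵀMA. Then: (1) there is a constant c ∈ ℝ such that for all δx ∈ ℝ^n and δu ∈ ℝ^p, the minimum over x' ∈ ℝ^n of l(δx,δu) + (1/2)·x'ᵀVx' + vᵀx' + v̄ + (2σ)⁻¹·(x' − Aδx − Bδu − f̄)ᵀΩ⁻¹(x' − Aδx − Bδu − f̄)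 equals (1/2)·δxᵀQ_xx δx + δuᵀQ_ux δx + (1/2)·δuᵀQ_uu δu + Q_xᵀδx + Q_uᵀδu + c; and (2) if in addition Q_uu is positive definite, then for each δx the unique minimizer of this expression over δu is δu* = −Q_uu⁻¹Q_u − Q_uu⁻¹Q_ux·δx. -/
open Matrix

lemma symmDot {m : ℕ} (C : Matrix (Fin m) (Fin m) ℝ) (hC : Cᵀ = C) (a b : Fin m → ℝ) :
    a ⬝ᵥ C *ᵥ b = b ⬝ᵥ C *ᵥ a := by
  rw [dotProduct_mulVec, ← mulVec_transpose, hC, dotProduct_comm]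

lemma dotT {m k : ℕ} (A : Matrix (Fin m) (Fin k) ℝ) (x : Fin k → ℝ) (y : Fin m → ℝ) :
    x ⬝ᵥ Aᵀ *ᵥ y = (A *ᵥ x) ⬝ᵥ y := by
  rw [dotProduct_mulVec, vecMul_transpose]

lemma dotT' {m k : ℕ} (A : Matrix (Fin m) (Fin k) ℝ) (x : Fin k → ℝ) (y : Fin m → ℝ) :
    (Aᵀ *ᵥ y) ⬝ᵥ x = y ⬝ᵥ (A *ᵥ x) := by
  rw [dotProduct_comm, dotT, dotProduct_comm]

lemma mulVec_dot {m k : ℕ} (C : Matrix (Fin m) (Fin k) ℝ) (x : Fin k → ℝ) (y : Fin m → ℝ) :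
    (C *ᵥ x) ⬝ᵥ y = x ⬝ᵥ Cᵀ *ᵥ y :=
  (dotT C x y).symm

lemma dotMV {m : ℕ} (M : Matrix (Fin m) (Fin m) ℝ) (hM : Mᵀ = M) (x y : Fin m → ℝ) :
    (M *ᵥ x) ⬝ᵥ y = x ⬝ᵥ M *ᵥ y := by
  rw [mulVec_dot, hM]

lemma quad_sq {m : ℕ} (H : Matrix (Fin m) (Fin m) ℝ) (hHs : Hᵀ = H) (b x x₀ : Fin m → ℝ)
    (hx₀ : H *ᵥ x₀ = -b) :
    (1/2) * (x ⬝ᵥ H *ᵥ x) + b ⬝ᵥ x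
      = ((1/2) * (x₀ ⬝ᵥ H *ᵥ x₀) + b ⬝ᵥ x₀) + (1/2) * ((x - x₀) ⬝ᵥ H *ᵥ (x - x₀)) := by
  have h1 : x₀ ⬝ᵥ H *ᵥ x = x ⬝ᵥ H *ᵥ x₀ := symmDot H hHs _ _
  have h2 : x ⬝ᵥ H *ᵥ x₀ = -(b ⬝ᵥ x) := by rw [hx₀, dotProduct_neg, dotProduct_comm]
  have h3 : x₀ ⬝ᵥ H *ᵥ x₀ = -(b ⬝ᵥ x₀) := by rw [hx₀, dotProduct_neg, dotProduct_comm]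
  have h4 : (x - x₀) ⬝ᵥ H *ᵥ (x - x₀)
      = x ⬝ᵥ H *ᵥ x - x ⬝ᵥ H *ᵥ x₀ - (x₀ ⬝ᵥ H *ᵥ x - x₀ ⬝ᵥ H *ᵥ x₀) := by
    rw [mulVec_sub, dotProduct_sub, sub_dotProduct, sub_dotProduct, symmDot H hHs x₀ x]
  rw [h4, h1, h2, h3]; ring

/-- **Theorem 1 of the paper (optimal control deviations).** After extremizing the next
state `x'` out of the one-step future stress, the result is the quadratic `Q`-function
(up to a constant `c`), and when `Q_uu` is positive definite the unique minimizing control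
deviation is `δu* = -Q_uu⁻¹ Q_u - Q_uu⁻¹ Q_ux δx`. -/
theorem optimal_control_deviation
    (n p : ℕ) (hn : 0 < n) (hp : 0 < p) (σ : ℝ) (hσ : σ ≠ 0)
    (Ω : Matrix (Fin n) (Fin n) ℝ) (hΩ_symm : Ω.IsSymm) (hΩ_pd : Ω.PosDef)
    (V : Matrix (Fin n) (Fin n) ℝ) (hV_symm : V.IsSymm) (hV_inv : IsUnit V.det)
    (hpd : (σ⁻¹ • Ω⁻¹ + V).PosDef)
    (v : Fin n → ℝ) (vbar : ℝ)
    (A : Matrix (Fin n) (Fin n) ℝ) (B : Matrix (Fin n) (Fin p) ℝ) (fbar : Fin n → ℝ)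
    (lxx : Matrix (Fin n) (Fin n) ℝ) (hlxx : lxx.IsSymm)
    (lux : Matrix (Fin p) (Fin n) ℝ)
    (luu : Matrix (Fin p) (Fin p) ℝ) (hluu : luu.IsSymm)
    (lx : Fin n → ℝ) (lu : Fin p → ℝ)
    (l : (Fin n → ℝ) → (Fin p → ℝ) → ℝ)
    (hl : ∀ δx δu, l δx δu = (1/2) * (δx ⬝ᵥ lxx *ᵥ δx) + δu ⬝ᵥ lux *ᵥ δx
        + (1/2) * (δu ⬝ᵥ luu *ᵥ δu) + lx ⬝ᵥ δx + lu ⬝ᵥ δu)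
    (M : Matrix (Fin n) (Fin n) ℝ) (hM : M = (σ • Ω + V⁻¹)⁻¹)
    (N : Fin n → ℝ) (hN : N = v - σ • ((M * Ω) *ᵥ v))
    (Qx : Fin n → ℝ) (hQx : Qx = lx + Aᵀ *ᵥ (M *ᵥ fbar) + Aᵀ *ᵥ N)
    (Qu : Fin p → ℝ) (hQu : Qu = lu + Bᵀ *ᵥ N + Bᵀ *ᵥ (M *ᵥ fbar))
    (Quu : Matrix (Fin p) (Fin p) ℝ) (hQuu : Quu = luu + Bᵀ * M * B)
    (Qux : Matrix (Fin p) (Fin n) ℝ) (hQux : Qux = lux + Bᵀ * M * A)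
    (Qxx : Matrix (Fin n) (Fin n) ℝ) (hQxx : Qxx = lxx + Aᵀ * M * A)
    -- the full one-step future stress, as a function of `δx`, `δu` and the next state `x'`
    (S : (Fin n → ℝ) → (Fin p → ℝ) → (Fin n → ℝ) → ℝ)
    (hS : ∀ δx δu x', S δx δu x' = l δx δu + (1/2) * (x' ⬝ᵥ V *ᵥ x') + v ⬝ᵥ x' + vbar
        + (2*σ)⁻¹ * ((x' - A *ᵥ δx - B *ᵥ δu - fbar) ⬝ᵥ Ω⁻¹ *ᵥ (x' - A *ᵥ δx - B *ᵥ δu - fbar)))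
    -- the resulting quadratic `Q`-function in `(δx, δu)`
    (G : (Fin n → ℝ) → (Fin p → ℝ) → ℝ)
    (hG : ∀ δx δu, G δx δu = (1/2) * (δx ⬝ᵥ Qxx *ᵥ δx) + δu ⬝ᵥ Qux *ᵥ δx
        + (1/2) * (δu ⬝ᵥ Quu *ᵥ δu) + Qx ⬝ᵥ δx + Qu ⬝ᵥ δu)
    (dustar : (Fin n → ℝ) → (Fin p → ℝ))
    (hdustar : ∀ δx, dustar δx = -(Quu⁻¹ *ᵥ Qu) - (Quu⁻¹ * Qux) *ᵥ δx) :
    (∃ c : ℝ, ∀ δx δu, IsLeast (Set.range (S δx δu)) (G δx δu + c)) ∧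
    (Quu.PosDef → ∀ δx δu, δu ≠ dustar δx →
      sInf (Set.range (S δx (dustar δx))) < sInf (Set.range (S δx δu))) := by
  set P : Matrix (Fin n) (Fin n) ℝ := σ⁻¹ • Ω⁻¹ with hPdef
  set H : Matrix (Fin n) (Fin n) ℝ := P + V with hHdef
  have hH_pd : H.PosDef := hpd
  have hΩdet : IsUnit Ω.det := hΩ_pd.det_pos.ne'.isUnit
  have hΩi_symm : Ω⁻¹ᵀ = Ω⁻¹ := by rw [Matrix.transpose_nonsing_inv, hΩ_symm.eq]
  have hP_symm : Pᵀ = P := by rw [hPdef, Matrix.transpose_smul, hΩi_symm]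
  have hH_symm : Hᵀ = H := by rw [hHdef, Matrix.transpose_add, hP_symm, hV_symm.eq]
  have hHdet : IsUnit H.det := hH_pd.det_pos.ne'.isUnit
  have hHH : H * H⁻¹ = 1 := Matrix.mul_nonsing_inv _ hHdet
  have hH'H : H⁻¹ * H = 1 := Matrix.nonsing_inv_mul _ hHdet
  have hHi_symm : H⁻¹ᵀ = H⁻¹ := by rw [Matrix.transpose_nonsing_inv, hH_symm]
  have hVi_symm : V⁻¹ᵀ = V⁻¹ := by rw [Matrix.transpose_nonsing_inv, hV_symm.eq]
  have e1 : (σ • Ω) * P = 1 := by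
    rw [hPdef, Matrix.smul_mul, Matrix.mul_smul, smul_smul, mul_inv_cancel₀ hσ, one_smul,
      Matrix.mul_nonsing_inv _ hΩdet]
  have e2 : (σ • Ω + V⁻¹) * V = (σ • Ω) * H := by
    rw [Matrix.add_mul, Matrix.nonsing_inv_mul _ hV_inv, hHdef, Matrix.mul_add, e1]
    exact add_comm _ _
  have e3 : (σ • Ω + V⁻¹) * (V * (H⁻¹ * P)) = 1 := by
    rw [← Matrix.mul_assoc, e2, Matrix.mul_assoc, ← Matrix.mul_assoc H H⁻¹ P, hHH,
      Matrix.one_mul, e1]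
  have hMeq : M = V * (H⁻¹ * P) := by rw [hM]; exact Matrix.inv_eq_right_inv e3
  have hM_symm : Mᵀ = M := by
    rw [hM, Matrix.transpose_nonsing_inv, Matrix.transpose_add, Matrix.transpose_smul,
      hΩ_symm.eq, hVi_symm]
  have hM' : P * H⁻¹ * V = M := by
    have ht : (V * (H⁻¹ * P))ᵀ = P * H⁻¹ * V := by
      rw [Matrix.transpose_mul, Matrix.transpose_mul, hHi_symm, hP_symm, hV_symm.eq]
    rw [← ht, ← hMeq, hM_symm]
  have key1 : P * H⁻¹ * P = P - M := by
    have h5 : P * H⁻¹ * H = P := by rw [Matrix.mul_assoc, hH'H, Matrix.mul_one]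
    have : P - P * H⁻¹ * P = M := by
      calc P - P * H⁻¹ * P = P * H⁻¹ * H - P * H⁻¹ * P := by rw [h5]
        _ = P * H⁻¹ * (H - P) := (Matrix.mul_sub _ _ _).symm
        _ = P * H⁻¹ * V := by rw [hHdef, add_sub_cancel_left]
        _ = M := hM'
    rw [← this, sub_sub_cancel]
  have hPΩ : P * Ω = σ⁻¹ • 1 := by
    rw [hPdef, Matrix.smul_mul, Matrix.nonsing_inv_mul _ hΩdet]
  have hMΩ : σ • (M * Ω) = V * H⁻¹ := by
    rw [hMeq, Matrix.mul_assoc, Matrix.mul_assoc, hPΩ, Matrix.mul_smul, Matrix.mul_one,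
      Matrix.mul_smul, smul_smul, mul_inv_cancel₀ hσ, one_smul]
  have key2 : N = (P * H⁻¹) *ᵥ v := by
    have h6 : P * H⁻¹ = 1 - V * H⁻¹ := by
      calc P * H⁻¹ = (H - V) * H⁻¹ := by rw [hHdef, add_sub_cancel_right]
        _ = 1 - V * H⁻¹ := by rw [Matrix.sub_mul, hHH]
    rw [hN, ← Matrix.smul_mulVec, hMΩ, h6, Matrix.sub_mulVec, Matrix.one_mulVec]
  set c : ℝ := vbar - (1/2) * (v ⬝ᵥ H⁻¹ *ᵥ v) + ((1/2) * (fbar ⬝ᵥ M *ᵥ fbar) + N ⬝ᵥ fbar)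
    with hcdef
  have core : ∀ δx δu, ∃ x₀ : Fin n → ℝ, ∀ x', S δx δu x'
      = (G δx δu + c) + (1/2) * ((x' - x₀) ⬝ᵥ H *ᵥ (x' - x₀)) := by
    intro δx δu
    set w : Fin n → ℝ := A *ᵥ δx + (B *ᵥ δu + fbar) with hwdef
    refine ⟨H⁻¹ *ᵥ (P *ᵥ w - v), ?_⟩
    set x₀ : Fin n → ℝ := H⁻¹ *ᵥ (P *ᵥ w - v) with hx₀def
    have hx₀ : H *ᵥ x₀ = -(v - P *ᵥ w) := by
      rw [hx₀def, Matrix.mulVec_mulVec, hHH, Matrix.one_mulVec, neg_sub]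
    have hvec : ∀ x' : Fin n → ℝ, x' - A *ᵥ δx - B *ᵥ δu - fbar = x' - w := by
      intro x'; rw [hwdef, sub_sub, sub_sub]
    have stepA : ∀ x', S δx δu x' = ((1/2) * (x' ⬝ᵥ H *ᵥ x') + (v - P *ᵥ w) ⬝ᵥ x')
        + (l δx δu + vbar + (1/2) * σ⁻¹ * (w ⬝ᵥ Ω⁻¹ *ᵥ w)) := by
      intro x'
      have hq : (x' - w) ⬝ᵥ Ω⁻¹ *ᵥ (x' - w)
          = x' ⬝ᵥ Ω⁻¹ *ᵥ x' - x' ⬝ᵥ Ω⁻¹ *ᵥ w - (x' ⬝ᵥ Ω⁻¹ *ᵥ w - w ⬝ᵥ Ω⁻¹ *ᵥ w) := by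
        rw [mulVec_sub, dotProduct_sub, sub_dotProduct, sub_dotProduct,
          symmDot Ω⁻¹ hΩi_symm w x']
      have hH1 : x' ⬝ᵥ H *ᵥ x' = σ⁻¹ * (x' ⬝ᵥ Ω⁻¹ *ᵥ x') + x' ⬝ᵥ V *ᵥ x' := by
        rw [hHdef, Matrix.add_mulVec, dotProduct_add, hPdef, Matrix.smul_mulVec,
          dotProduct_smul, smul_eq_mul]
      have hH2 : (v - P *ᵥ w) ⬝ᵥ x' = v ⬝ᵥ x' - σ⁻¹ * (x' ⬝ᵥ Ω⁻¹ *ᵥ w) := by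
        rw [sub_dotProduct, hPdef, Matrix.smul_mulVec, smul_dotProduct, smul_eq_mul,
          dotProduct_comm (Ω⁻¹ *ᵥ w) x']
      rw [hS, hvec x', hq, hH1, hH2, mul_inv]
      ring
    have f1 : v ⬝ᵥ H⁻¹ *ᵥ (P *ᵥ w) = N ⬝ᵥ w := by
      rw [Matrix.mulVec_mulVec, key2, mulVec_dot, Matrix.transpose_mul, hP_symm, hHi_symm]
    have f2 : (P *ᵥ w) ⬝ᵥ (H⁻¹ *ᵥ v) = N ⬝ᵥ w := by
      rw [mulVec_dot, hP_symm, Matrix.mulVec_mulVec, key2, dotProduct_comm]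
    have hwP : w ⬝ᵥ P *ᵥ w = σ⁻¹ * (w ⬝ᵥ Ω⁻¹ *ᵥ w) := by
      rw [hPdef, Matrix.smul_mulVec, dotProduct_smul, smul_eq_mul]
    have f3 : (P *ᵥ w) ⬝ᵥ (H⁻¹ *ᵥ (P *ᵥ w)) = σ⁻¹ * (w ⬝ᵥ Ω⁻¹ *ᵥ w) - w ⬝ᵥ M *ᵥ w := by
      rw [mulVec_dot, hP_symm, Matrix.mulVec_mulVec, Matrix.mulVec_mulVec,
        key1, Matrix.sub_mulVec, dotProduct_sub, hwP]
    have hbx : (v - P *ᵥ w) ⬝ᵥ x₀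
        = N ⬝ᵥ w - (σ⁻¹ * (w ⬝ᵥ Ω⁻¹ *ᵥ w) - w ⬝ᵥ M *ᵥ w) - (v ⬝ᵥ H⁻¹ *ᵥ v - N ⬝ᵥ w) := by
      rw [hx₀def, Matrix.mulVec_sub, dotProduct_sub, sub_dotProduct, sub_dotProduct, f1, f2, f3]
    have hA1 : x₀ ⬝ᵥ H *ᵥ x₀ = -((v - P *ᵥ w) ⬝ᵥ x₀) := by
      rw [hx₀, dotProduct_neg, dotProduct_comm]
    have expw : w ⬝ᵥ M *ᵥ w
        = (A *ᵥ δx) ⬝ᵥ M *ᵥ (A *ᵥ δx) + (B *ᵥ δu) ⬝ᵥ M *ᵥ (B *ᵥ δu) + fbar ⬝ᵥ M *ᵥ fbar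
          + 2 * ((B *ᵥ δu) ⬝ᵥ M *ᵥ (A *ᵥ δx)) + 2 * (fbar ⬝ᵥ M *ᵥ (A *ᵥ δx))
          + 2 * (fbar ⬝ᵥ M *ᵥ (B *ᵥ δu)) := by
      rw [hwdef]
      simp only [Matrix.mulVec_add, dotProduct_add, add_dotProduct]
      rw [symmDot M hM_symm (A *ᵥ δx) (B *ᵥ δu), symmDot M hM_symm (A *ᵥ δx) fbar,
        symmDot M hM_symm (B *ᵥ δu) fbar]
      ring
    have expN : N ⬝ᵥ w = N ⬝ᵥ (A *ᵥ δx) + (N ⬝ᵥ (B *ᵥ δu) + N ⬝ᵥ fbar) := by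
      rw [hwdef, dotProduct_add, dotProduct_add]
    have hGa : δx ⬝ᵥ Qxx *ᵥ δx = δx ⬝ᵥ lxx *ᵥ δx + (A *ᵥ δx) ⬝ᵥ M *ᵥ (A *ᵥ δx) := by
      rw [hQxx, Matrix.add_mulVec, dotProduct_add, Matrix.mul_assoc, ← Matrix.mulVec_mulVec,
        ← Matrix.mulVec_mulVec, dotT]
    have hGb : δu ⬝ᵥ Qux *ᵥ δx = δu ⬝ᵥ lux *ᵥ δx + (B *ᵥ δu) ⬝ᵥ M *ᵥ (A *ᵥ δx) := by
      rw [hQux, Matrix.add_mulVec, dotProduct_add, Matrix.mul_assoc, ← Matrix.mulVec_mulVec,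
        ← Matrix.mulVec_mulVec, dotT]
    have hGc : δu ⬝ᵥ Quu *ᵥ δu = δu ⬝ᵥ luu *ᵥ δu + (B *ᵥ δu) ⬝ᵥ M *ᵥ (B *ᵥ δu) := by
      rw [hQuu, Matrix.add_mulVec, dotProduct_add, Matrix.mul_assoc, ← Matrix.mulVec_mulVec,
        ← Matrix.mulVec_mulVec, dotT]
    have hGd : Qx ⬝ᵥ δx = lx ⬝ᵥ δx + fbar ⬝ᵥ M *ᵥ (A *ᵥ δx) + N ⬝ᵥ (A *ᵥ δx) := by
      rw [hQx, add_dotProduct, add_dotProduct, dotT' A δx (M *ᵥ fbar), dotT' A δx N,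
        dotMV M hM_symm]
    have hGe : Qu ⬝ᵥ δu = lu ⬝ᵥ δu + N ⬝ᵥ (B *ᵥ δu) + fbar ⬝ᵥ M *ᵥ (B *ᵥ δu) := by
      rw [hQu, add_dotProduct, add_dotProduct, dotT' B δu N, dotT' B δu (M *ᵥ fbar),
        dotMV M hM_symm]
    have stepC : ((1/2) * (x₀ ⬝ᵥ H *ᵥ x₀) + (v - P *ᵥ w) ⬝ᵥ x₀)
        + (l δx δu + vbar + (1/2) * σ⁻¹ * (w ⬝ᵥ Ω⁻¹ *ᵥ w)) = G δx δu + c := by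
      rw [hA1, hbx, hl, hG, hGa, hGb, hGc, hGd, hGe, hcdef, expw, expN]
      ring
    intro x'
    rw [stepA x', quad_sq H hH_symm (v - P *ᵥ w) x' x₀ hx₀]
    linarith [stepC]
  have hLeast : ∀ δx δu, IsLeast (Set.range (S δx δu)) (G δx δu + c) := by
    intro δx δu
    obtain ⟨x₀, hx⟩ := core δx δu
    constructor
    · exact ⟨x₀, by rw [hx x₀]; simp⟩
    · rintro y ⟨x', rfl⟩
      rw [hx x']
      have h0 : 0 ≤ (x' - x₀) ⬝ᵥ H *ᵥ (x' - x₀) := by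
        have h := hH_pd.posSemidef.dotProduct_mulVec_nonneg (x' - x₀)
        rwa [star_trivial] at h
      linarith
  refine ⟨⟨c, hLeast⟩, ?_⟩
  intro hQpd δx δu hne
  have hval : ∀ du, sInf (Set.range (S δx du)) = G δx du + c := fun du =>
    (hLeast δx du).csInf_eq
  rw [hval, hval]
  have hQuu_symm : Quuᵀ = Quu := by
    rw [hQuu, Matrix.transpose_add, hluu.eq, Matrix.transpose_mul, Matrix.transpose_mul,
      Matrix.transpose_transpose, hM_symm, Matrix.mul_assoc]
  have hQdet : IsUnit Quu.det := hQpd.det_pos.ne'.isUnit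
  have hust : Quu *ᵥ (dustar δx) = -(Qu + Qux *ᵥ δx) := by
    rw [hdustar, Matrix.mulVec_sub, Matrix.mulVec_neg, Matrix.mulVec_mulVec,
      Matrix.mul_nonsing_inv _ hQdet, Matrix.one_mulVec, Matrix.mulVec_mulVec,
      ← Matrix.mul_assoc, Matrix.mul_nonsing_inv _ hQdet, Matrix.one_mul]
    abel
  have hGexp : ∀ du, G δx du = ((1/2) * (du ⬝ᵥ Quu *ᵥ du) + (Qu + Qux *ᵥ δx) ⬝ᵥ du)
      + ((1/2) * (δx ⬝ᵥ Qxx *ᵥ δx) + Qx ⬝ᵥ δx) := by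
    intro du
    rw [hG, add_dotProduct, dotProduct_comm (Qux *ᵥ δx) du]
    ring
  have sq := quad_sq Quu hQuu_symm (Qu + Qux *ᵥ δx) δu (dustar δx) hust
  have hpos : 0 < (δu - dustar δx) ⬝ᵥ Quu *ᵥ (δu - dustar δx) := by
    have h := hQpd.dotProduct_mulVec_pos (sub_ne_zero.mpr hne)
    rwa [star_trivial] at h
  rw [hGexp δu, hGexp (dustar δx)]
  linarith [sq, hpos]
end

section
/- Let n be a positive integer, σ ≠ 0 a real number, Ω a symmetric positive definite n×n real matrix, V a symmetric invertible n×n real matrix such that σV + Ω⁻¹ is positive definite, v ∈ ℝ^n, v̄ ∈ ℝ, and z ∈ ℝ^n. Then ∫_{ℝ^n} exp(−σ·((1/2)·xᵀVx + vᵀx + v̄)) · (det(2πΩ))^(−1/2) · exp(−(1/2)·(x − z)ᵀΩ⁻¹(x − z)) dx = det(I + σΩV)^(−1/2) · exp(−σ·((1/2)·zᵀMz + Nᵀz + v̄ − (1/2)·vᵀ(V + σ⁻¹Ω⁻¹)⁻¹v)), where M = (σΩ + V⁻¹)⁻¹ and N = v − σMΩv; in particular σΩ + V⁻¹ and V + σ⁻¹Ω⁻¹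 are invertible and det(I + σΩV) > 0. -/
open MeasureTheory Matrix Real


lemma gauss_sum_aux (n : ℕ) (c : Fin n → ℝ) :
    ∫ y : Fin n → ℝ, Real.exp (-(1/2) * ∑ i, y i ^ 2 + ∑ i, c i * y i)
      = (2 * π) ^ ((n : ℝ) / 2) * Real.exp ((∑ i, c i ^ 2) / 2) := by
  have h := GaussianFourier.integral_cexp_neg_mul_sum_add (b := (1/2 : ℂ)) (by norm_num) (fun i ↦ (c i : ℂ))
  have hL : (∫ y : Fin n → ℝ, Complex.exp (-(1/2 : ℂ) * ∑ i, (y i : ℂ) ^ 2 + ∑ i, (c i : ℂ) * (y i : ℂ)))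
      = ((∫ y : Fin n → ℝ, Real.exp (-(1/2) * ∑ i, y i ^ 2 + ∑ i, c i * y i) : ℝ) : ℂ) := by
    rw [show ((∫ y : Fin n → ℝ, Real.exp (-(1/2) * ∑ i, y i ^ 2 + ∑ i, c i * y i) : ℝ) : ℂ)
        = Complex.ofRealLI (∫ y : Fin n → ℝ, Real.exp (-(1/2) * ∑ i, y i ^ 2 + ∑ i, c i * y i)) from rfl,
      ← Complex.ofRealLI.integral_comp_comm]
    congr 1; ext y
    show Complex.exp _ = ((rexp _ : ℝ) : ℂ)
    rw [Complex.ofReal_exp]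
    congr 1
    push_cast
    ring
  rw [hL] at h
  have hR : ((π : ℂ) / (1/2)) ^ ((Fintype.card (Fin n)) / 2 : ℂ) * Complex.exp ((∑ i, (c i:ℂ) ^ 2) / (4 * (1/2)))
      = (((2 * π) ^ ((n : ℝ) / 2) * Real.exp ((∑ i, c i ^ 2) / 2) : ℝ) : ℂ) := by
    have h2π : ((π : ℂ) / (1/2)) = ((2 * π : ℝ) : ℂ) := by push_cast; ring
    have hcard : ((Fintype.card (Fin n)) / 2 : ℂ) = (((n : ℝ) / 2 : ℝ) : ℂ) := by
      rw [Fintype.card_fin]; push_cast; ring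
    rw [h2π, hcard, ← Complex.ofReal_cpow (by positivity)]
    rw [Complex.ofReal_mul, Complex.ofReal_exp]
    congr 1
    push_cast
    ring
  rw [hR] at h
  exact_mod_cast h


lemma integral_comp_mulVec {n : ℕ} (S : Matrix (Fin n) (Fin n) ℝ) (hS : S.det ≠ 0)
    (f : (Fin n → ℝ) → ℝ) :
    ∫ x : Fin n → ℝ, f (S *ᵥ x) = |S.det|⁻¹ * ∫ x : Fin n → ℝ, f x := by
  have hdet : LinearMap.det (Matrix.toLin' S) = S.det := LinearMap.det_toLin' S
  have hne : LinearMap.det (Matrix.toLin' S) ≠ 0 := hdet ▸ hS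
  let e : (Fin n → ℝ) ≃ₗ[ℝ] (Fin n → ℝ) := LinearMap.equivOfDetNeZero _ hne
  let me : (Fin n → ℝ) ≃ᵐ (Fin n → ℝ) :=
    e.toContinuousLinearEquiv.toHomeomorph.toMeasurableEquiv
  have hmap : Measure.map me volume
      = ENNReal.ofReal (|S.det|⁻¹) • (volume : Measure (Fin n → ℝ)) := by
    have : (me : (Fin n → ℝ) → (Fin n → ℝ)) = Matrix.toLin' S := rfl
    rw [show Measure.map me volume = Measure.map (Matrix.toLin' S) volume by rw [← this]]
    rw [MeasureTheory.Measure.map_linearMap_addHaar_pi_eq_smul_addHaar hne volume, hdet]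
    congr 1
    rw [abs_inv]
  have h1 : ∫ x, f (S *ᵥ x) = ∫ x, f (me x) := by
    congr 1
  rw [h1, ← MeasureTheory.integral_map_equiv me f, hmap,
    integral_smul_measure]
  rw [ENNReal.toReal_ofReal (by positivity)]
  simp [smul_eq_mul]

lemma mulVec_dot_mulVec {n : ℕ} (B C : Matrix (Fin n) (Fin n) ℝ) (x y : Fin n → ℝ) :
    (B *ᵥ x) ⬝ᵥ (C *ᵥ y) = x ⬝ᵥ (Bᵀ * C) *ᵥ y := by
  rw [← Matrix.mulVec_mulVec, Matrix.dotProduct_mulVec x, Matrix.vecMul_transpose]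

open scoped MatrixOrder in
lemma integral_gauss_quadratic {n : ℕ} (A : Matrix (Fin n) (Fin n) ℝ) (hA : A.PosDef)
    (b : Fin n → ℝ) :
    ∫ x : Fin n → ℝ, Real.exp (-(1/2) * (x ⬝ᵥ A *ᵥ x) + b ⬝ᵥ x)
      = (2 * π) ^ ((n : ℝ) / 2) * A.det ^ (-(1/2) : ℝ)
        * Real.exp ((1/2) * (b ⬝ᵥ A⁻¹ *ᵥ b)) := by
  have hAdet : 0 < A.det := hA.det_pos
  set S := CFC.sqrt A with hSdef
  have hSS : S * S = A := CFC.sqrt_mul_sqrt_self A hA.posSemidef.nonneg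
  have hSsymm : Sᵀ = S := by
    have h := (CFC.sqrt_nonneg A).posSemidef.1
    simpa [Matrix.IsHermitian] using h
  have hSdet2 : S.det * S.det = A.det := by rw [← Matrix.det_mul, hSS]
  have hSdet : S.det ≠ 0 := by
    intro h; rw [h, mul_zero] at hSdet2; exact hAdet.ne hSdet2
  have hSunit : IsUnit S.det := isUnit_iff_ne_zero.mpr hSdet
  have hSi_symm : (S⁻¹)ᵀ = S⁻¹ := by rw [Matrix.transpose_nonsing_inv, hSsymm]
  have hSidet : (S⁻¹).det ≠ 0 := by
    rw [Matrix.det_nonsing_inv]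
    simpa using hSdet
  have hSiS : S⁻¹ * S = 1 := Matrix.nonsing_inv_mul S hSunit
  have hSSi : S * S⁻¹ = 1 := Matrix.mul_nonsing_inv S hSunit
  have hAinv : S⁻¹ * S⁻¹ = A⁻¹ := by rw [← Matrix.mul_inv_rev, hSS]
  -- change of variables x = S⁻¹ y
  have hcv := integral_comp_mulVec (S⁻¹) hSidet
    (fun x => Real.exp (-(1/2) * (x ⬝ᵥ A *ᵥ x) + b ⬝ᵥ x))
  have hpt : ∀ y : Fin n → ℝ,
      Real.exp (-(1/2) * ((S⁻¹ *ᵥ y) ⬝ᵥ A *ᵥ (S⁻¹ *ᵥ y)) + b ⬝ᵥ (S⁻¹ *ᵥ y))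
      = Real.exp (-(1/2) * ∑ i, y i ^ 2 + ∑ i, (S⁻¹ *ᵥ b) i * y i) := by
    intro y
    congr 1
    have h1 : (S⁻¹ *ᵥ y) ⬝ᵥ A *ᵥ (S⁻¹ *ᵥ y) = ∑ i, y i ^ 2 := by
      rw [Matrix.mulVec_mulVec, mulVec_dot_mulVec, hSi_symm]
      have : S⁻¹ * (A * S⁻¹) = 1 := by
        rw [← hSS, Matrix.mul_assoc, hSSi, Matrix.mul_one, hSiS]
      rw [this, Matrix.one_mulVec]
      simp [dotProduct, sq]
    have h2 : b ⬝ᵥ (S⁻¹ *ᵥ y) = ∑ i, (S⁻¹ *ᵥ b) i * y i := by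
      rw [Matrix.dotProduct_mulVec, ← Matrix.vecMul_transpose, hSi_symm]
      rfl
    rw [h1, h2]
  have hdetSi : |S⁻¹.det| = |S.det|⁻¹ := by
    rw [Matrix.det_nonsing_inv, Ring.inverse_eq_inv, abs_inv]
  rw [show (∫ x : Fin n → ℝ, Real.exp (-(1/2) * (x ⬝ᵥ A *ᵥ x) + b ⬝ᵥ x))
      = |S.det|⁻¹ * ∫ y, Real.exp (-(1/2) * ((S⁻¹ *ᵥ y) ⬝ᵥ A *ᵥ (S⁻¹ *ᵥ y)) + b ⬝ᵥ (S⁻¹ *ᵥ y)) by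
    rw [hcv, hdetSi, inv_inv, ← mul_assoc,
      inv_mul_cancel₀ (abs_ne_zero.mpr hSdet), one_mul]]
  simp_rw [hpt]
  rw [gauss_sum_aux]
  have hsum : (∑ i, (S⁻¹ *ᵥ b) i ^ 2) = b ⬝ᵥ A⁻¹ *ᵥ b := by
    have : (∑ i, (S⁻¹ *ᵥ b) i ^ 2) = (S⁻¹ *ᵥ b) ⬝ᵥ (S⁻¹ *ᵥ b) := by
      simp [dotProduct, sq]
    rw [this, mulVec_dot_mulVec, hSi_symm, hAinv]
  rw [hsum]
  have habs : |S.det| = A.det ^ ((1:ℝ)/2) := by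
    rw [← Real.sqrt_eq_rpow, ← hSdet2, Real.sqrt_mul_self_eq_abs]
  have habs' : |S.det|⁻¹ = A.det ^ (-(1/2) : ℝ) := by
    rw [habs, ← Real.rpow_neg hAdet.le]
  rw [habs']
  ring_nf

lemma swap_dot {n : ℕ} (B : Matrix (Fin n) (Fin n) ℝ) (x y : Fin n → ℝ) :
    x ⬝ᵥ B *ᵥ y = y ⬝ᵥ Bᵀ *ᵥ x := by
  rw [Matrix.dotProduct_mulVec y, Matrix.vecMul_transpose, dotProduct_comm]

lemma mulVec_dot_mulVec' {n : ℕ} (B C : Matrix (Fin n) (Fin n) ℝ) (x y : Fin n → ℝ) :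
    (B *ᵥ x) ⬝ᵥ (C *ᵥ y) = x ⬝ᵥ (Bᵀ * C) *ᵥ y := by
  rw [← Matrix.mulVec_mulVec, Matrix.dotProduct_mulVec x, Matrix.vecMul_transpose]

/-- **One-step Gaussian-expectation identity** underlying the risk-sensitive cost recursion
(Theorem 3 of the paper): the expectation of `exp (-σ q(x))` of a quadratic `q` under
`x ~ N(z, Ω)` is again an exponential of a quadratic in `z`, with determinant prefactor
`det (I + σ Ω V) ^ (-1/2)`. -/
theorem gaussian_exp_quadratic_expectation
    (n : ℕ) (hn : 0 < n) (σ : ℝ) (hσ : σ ≠ 0)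
    (Ω : Matrix (Fin n) (Fin n) ℝ) (hΩ_symm : Ω.IsSymm) (hΩ_pd : Ω.PosDef)
    (V : Matrix (Fin n) (Fin n) ℝ) (hV_symm : V.IsSymm) (hV_inv : IsUnit V.det)
    (hpd : (σ • V + Ω⁻¹).PosDef)
    (v : Fin n → ℝ) (vbar : ℝ) (z : Fin n → ℝ)
    (M : Matrix (Fin n) (Fin n) ℝ) (hM : M = (σ • Ω + V⁻¹)⁻¹)
    (N : Fin n → ℝ) (hN : N = v - σ • ((M * Ω) *ᵥ v)) :
    IsUnit (σ • Ω + V⁻¹).det ∧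
    IsUnit (V + σ⁻¹ • Ω⁻¹).det ∧
    0 < (1 + σ • (Ω * V)).det ∧
    (∫ x : Fin n → ℝ,
        Real.exp (-σ * ((1/2) * (x ⬝ᵥ V *ᵥ x) + v ⬝ᵥ x + vbar))
          * (((2 * Real.pi) • Ω).det) ^ (-(1/2) : ℝ)
          * Real.exp (-(1/2) * ((x - z) ⬝ᵥ Ω⁻¹ *ᵥ (x - z))))
      = ((1 + σ • (Ω * V)).det) ^ (-(1/2) : ℝ)
        * Real.exp (-σ * ((1/2) * (z ⬝ᵥ M *ᵥ z) + N ⬝ᵥ z + vbar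
            - (1/2) * (v ⬝ᵥ (V + σ⁻¹ • Ω⁻¹)⁻¹ *ᵥ v))) := by
  set A : Matrix (Fin n) (Fin n) ℝ := σ • V + Ω⁻¹ with hAdef
  have hΩdet : 0 < Ω.det := hΩ_pd.det_pos
  have hΩunit : IsUnit Ω.det := isUnit_iff_ne_zero.mpr hΩdet.ne'
  have hAdet : 0 < A.det := hpd.det_pos
  have hAunit : IsUnit A.det := isUnit_iff_ne_zero.mpr hAdet.ne'
  have hΩΩi : Ω * Ω⁻¹ = 1 := Matrix.mul_nonsing_inv Ω hΩunit
  have hΩiΩ : Ω⁻¹ * Ω = 1 := Matrix.nonsing_inv_mul Ω hΩunit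
  have hΩi_symm : (Ω⁻¹)ᵀ = Ω⁻¹ := by rw [Matrix.transpose_nonsing_inv, hΩ_symm.eq]
  have hA_symm : Aᵀ = A := by
    rw [hAdef, Matrix.transpose_add, Matrix.transpose_smul, hV_symm.eq, hΩi_symm]
  have hAi_symm : (A⁻¹)ᵀ = A⁻¹ := by rw [Matrix.transpose_nonsing_inv, hA_symm]
  set P : Matrix (Fin n) (Fin n) ℝ := 1 + σ • (V * Ω) with hPdef
  set Q : Matrix (Fin n) (Fin n) ℝ := 1 + σ • (Ω * V) with hQdef
  have hQ : Q = Ω * A := by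
    rw [hQdef, hAdef, Matrix.mul_add, Matrix.mul_smul, hΩΩi, add_comm]
  have hP : P = A * Ω := by
    rw [hPdef, hAdef, Matrix.add_mul, Matrix.smul_mul, hΩiΩ, add_comm]
  have hQdet : Q.det = Ω.det * A.det := by rw [hQ, Matrix.det_mul]
  have hQpos : 0 < Q.det := by rw [hQdet]; positivity
  have hPdet : P.det = A.det * Ω.det := by rw [hP, Matrix.det_mul]
  have hPunit : IsUnit P.det := by rw [hPdet]; exact hAunit.mul hΩunit
  have hPPi : P * P⁻¹ = 1 := Matrix.mul_nonsing_inv P hPunit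
  have hPiP : P⁻¹ * P = 1 := Matrix.nonsing_inv_mul P hPunit
  have hA_eq : A = P * Ω⁻¹ := by
    rw [hP, Matrix.mul_assoc, hΩΩi, Matrix.mul_one]
  have hAi : A⁻¹ = Ω * P⁻¹ := by
    rw [hA_eq, Matrix.mul_inv_rev, Matrix.nonsing_inv_nonsing_inv Ω hΩunit]
  have hOiAi : Ω⁻¹ * A⁻¹ = P⁻¹ := by
    rw [hAi, ← Matrix.mul_assoc, hΩiΩ, Matrix.one_mul]
  -- σ • Ω + V⁻¹ = V⁻¹ * P
  have hSOVi : σ • Ω + V⁻¹ = V⁻¹ * P := by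
    rw [hPdef, Matrix.mul_add, Matrix.mul_one, Matrix.mul_smul, ← Matrix.mul_assoc,
      Matrix.nonsing_inv_mul V hV_inv, Matrix.one_mul, add_comm]
  have hViunit : IsUnit (V⁻¹).det := Matrix.isUnit_nonsing_inv_det V hV_inv
  have hc1 : IsUnit (σ • Ω + V⁻¹).det := by
    rw [hSOVi, Matrix.det_mul]; exact hViunit.mul hPunit
  -- V + σ⁻¹ • Ω⁻¹ = σ⁻¹ • A
  have hVs : V + σ⁻¹ • Ω⁻¹ = σ⁻¹ • A := by
    rw [hAdef, smul_add, smul_smul, inv_mul_cancel₀ hσ, one_smul]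
  have hc2 : IsUnit (V + σ⁻¹ • Ω⁻¹).det := by
    rw [hVs, Matrix.det_smul]
    exact isUnit_iff_ne_zero.mpr (by positivity)
  have hVsinv : (V + σ⁻¹ • Ω⁻¹)⁻¹ = σ • A⁻¹ := by
    rw [hVs]
    apply Matrix.inv_eq_right_inv
    rw [Matrix.smul_mul, Matrix.mul_smul, smul_smul, inv_mul_cancel₀ hσ,
      Matrix.mul_nonsing_inv A hAunit, one_smul]
  have hM' : M = P⁻¹ * V := by
    rw [hM, hSOVi, Matrix.mul_inv_rev, Matrix.nonsing_inv_nonsing_inv V hV_inv]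
  have hE3 : Ω⁻¹ * (A⁻¹ * Ω⁻¹) = Ω⁻¹ - σ • M := by
    rw [← Matrix.mul_assoc, hOiAi, hM']
    have h1 : Ω⁻¹ = P⁻¹ * A := by rw [hA_eq, ← Matrix.mul_assoc, hPiP, Matrix.one_mul]
    conv_lhs => rw [show (Ω⁻¹ : Matrix (Fin n) (Fin n) ℝ) = A - σ • V from by
      rw [hAdef, add_sub_cancel_left]]
    rw [Matrix.mul_sub, ← h1, Matrix.mul_smul]
  have hN' : N = P⁻¹ *ᵥ v := by
    rw [hN, hM', Matrix.mul_assoc]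
    have h1 : σ • ((P⁻¹ * (V * Ω)) *ᵥ v) = (P⁻¹ * (σ • (V * Ω))) *ᵥ v := by
      rw [Matrix.mul_smul, Matrix.smul_mulVec]
    rw [h1, show v - (P⁻¹ * (σ • (V * Ω))) *ᵥ v = ((1 : Matrix (Fin n) (Fin n) ℝ)
        - P⁻¹ * (σ • (V * Ω))) *ᵥ v from by rw [Matrix.sub_mulVec, Matrix.one_mulVec]]
    have h2 : (1 : Matrix (Fin n) (Fin n) ℝ) - P⁻¹ * (σ • (V * Ω)) = P⁻¹ :=
      calc (1 : Matrix (Fin n) (Fin n) ℝ) - P⁻¹ * (σ • (V * Ω))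
        = P⁻¹ * P - P⁻¹ * (σ • (V * Ω)) := by rw [hPiP]
      _ = P⁻¹ * (P - σ • (V * Ω)) := by rw [Matrix.mul_sub]
      _ = P⁻¹ := by rw [hPdef, add_sub_cancel_right, Matrix.mul_one]
    rw [h2]
  refine ⟨hc1, hc2, hQpos, ?_⟩
  set b : Fin n → ℝ := Ω⁻¹ *ᵥ z - σ • v with hbdef
  set K : ℝ := -(σ * vbar) - (1/2) * (z ⬝ᵥ Ω⁻¹ *ᵥ z) with hKdef
  set C0 : ℝ := (((2 * Real.pi) • Ω).det) ^ (-(1/2) : ℝ) with hC0def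
  have hpt : ∀ x : Fin n → ℝ,
      Real.exp (-σ * ((1/2) * (x ⬝ᵥ V *ᵥ x) + v ⬝ᵥ x + vbar)) * C0
          * Real.exp (-(1/2) * ((x - z) ⬝ᵥ Ω⁻¹ *ᵥ (x - z)))
        = (C0 * Real.exp K) * Real.exp (-(1/2) * (x ⬝ᵥ A *ᵥ x) + b ⬝ᵥ x) := by
    intro x
    have e1 : x ⬝ᵥ A *ᵥ x = σ * (x ⬝ᵥ V *ᵥ x) + x ⬝ᵥ Ω⁻¹ *ᵥ x := by
      rw [hAdef, Matrix.add_mulVec, Matrix.smul_mulVec, dotProduct_add,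
        dotProduct_smul, smul_eq_mul]
    have hswz : x ⬝ᵥ Ω⁻¹ *ᵥ z = z ⬝ᵥ Ω⁻¹ *ᵥ x := by
      rw [swap_dot, hΩi_symm]
    have e2 : (x - z) ⬝ᵥ Ω⁻¹ *ᵥ (x - z)
        = x ⬝ᵥ Ω⁻¹ *ᵥ x - 2 * (z ⬝ᵥ Ω⁻¹ *ᵥ x) + z ⬝ᵥ Ω⁻¹ *ᵥ z := by
      rw [Matrix.mulVec_sub, dotProduct_sub, sub_dotProduct, sub_dotProduct, hswz]
      ring
    have e3 : b ⬝ᵥ x = z ⬝ᵥ Ω⁻¹ *ᵥ x - σ * (v ⬝ᵥ x) := by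
      rw [hbdef, sub_dotProduct, smul_dotProduct, smul_eq_mul]
      congr 1
      rw [dotProduct_comm, hswz]
    have hexp : Real.exp (-σ * ((1/2) * (x ⬝ᵥ V *ᵥ x) + v ⬝ᵥ x + vbar))
          * Real.exp (-(1/2) * ((x - z) ⬝ᵥ Ω⁻¹ *ᵥ (x - z)))
        = Real.exp K * Real.exp (-(1/2) * (x ⬝ᵥ A *ᵥ x) + b ⬝ᵥ x) := by
      rw [← Real.exp_add, ← Real.exp_add]
      congr 1
      rw [e1, e2, e3, hKdef]
      ring
    calc Real.exp (-σ * ((1/2) * (x ⬝ᵥ V *ᵥ x) + v ⬝ᵥ x + vbar)) * C0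
          * Real.exp (-(1/2) * ((x - z) ⬝ᵥ Ω⁻¹ *ᵥ (x - z)))
        = C0 * (Real.exp (-σ * ((1/2) * (x ⬝ᵥ V *ᵥ x) + v ⬝ᵥ x + vbar))
            * Real.exp (-(1/2) * ((x - z) ⬝ᵥ Ω⁻¹ *ᵥ (x - z)))) := by ring
      _ = C0 * (Real.exp K * Real.exp (-(1/2) * (x ⬝ᵥ A *ᵥ x) + b ⬝ᵥ x)) := by rw [hexp]
      _ = (C0 * Real.exp K) * Real.exp (-(1/2) * (x ⬝ᵥ A *ᵥ x) + b ⬝ᵥ x) := by ring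
  rw [show (∫ x : Fin n → ℝ,
        Real.exp (-σ * ((1/2) * (x ⬝ᵥ V *ᵥ x) + v ⬝ᵥ x + vbar)) * C0
          * Real.exp (-(1/2) * ((x - z) ⬝ᵥ Ω⁻¹ *ᵥ (x - z))))
      = ∫ x : Fin n → ℝ, (C0 * Real.exp K) * Real.exp (-(1/2) * (x ⬝ᵥ A *ᵥ x) + b ⬝ᵥ x) from by
    congr 1; funext x; exact hpt x]
  rw [MeasureTheory.integral_const_mul, integral_gauss_quadratic A hpd b]
  -- prefactor identity
  have h2π : (0:ℝ) < 2 * π := by positivity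
  have hpre : C0 * ((2 * π) ^ ((n:ℝ)/2) * A.det ^ (-(1/2) : ℝ)) = Q.det ^ (-(1/2) : ℝ) := by
    have hC0 : C0 = ((2*π)^n : ℝ) ^ (-(1/2) : ℝ) * Ω.det ^ (-(1/2) : ℝ) := by
      rw [hC0def, Matrix.det_smul, Fintype.card_fin, Real.mul_rpow (by positivity) hΩdet.le]
    have hcancel : ((2*π)^n : ℝ) ^ (-(1/2) : ℝ) * (2 * π) ^ ((n:ℝ)/2) = 1 := by
      rw [← Real.rpow_natCast (2*π) n, ← Real.rpow_mul h2π.le, ← Real.rpow_add h2π]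
      rw [show (n:ℝ) * (-(1/2)) + (n:ℝ)/2 = 0 by ring, Real.rpow_zero]
    calc C0 * ((2 * π) ^ ((n:ℝ)/2) * A.det ^ (-(1/2) : ℝ))
        = (((2*π)^n : ℝ) ^ (-(1/2) : ℝ) * (2 * π) ^ ((n:ℝ)/2))
            * (Ω.det ^ (-(1/2) : ℝ) * A.det ^ (-(1/2) : ℝ)) := by rw [hC0]; ring
      _ = Ω.det ^ (-(1/2) : ℝ) * A.det ^ (-(1/2) : ℝ) := by rw [hcancel, one_mul]
      _ = (Ω.det * A.det) ^ (-(1/2) : ℝ) := by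
            rw [← Real.mul_rpow hΩdet.le hAdet.le]
      _ = Q.det ^ (-(1/2) : ℝ) := by rw [hQdet]
  -- exponent identity
  have ht1 : (Ω⁻¹ *ᵥ z) ⬝ᵥ A⁻¹ *ᵥ (Ω⁻¹ *ᵥ z) = z ⬝ᵥ (Ω⁻¹ * (A⁻¹ * Ω⁻¹)) *ᵥ z := by
    rw [Matrix.mulVec_mulVec, mulVec_dot_mulVec', hΩi_symm]
  have ht2 : (Ω⁻¹ *ᵥ z) ⬝ᵥ A⁻¹ *ᵥ v = z ⬝ᵥ P⁻¹ *ᵥ v := by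
    rw [mulVec_dot_mulVec', hΩi_symm, hOiAi]
  have ht3 : v ⬝ᵥ A⁻¹ *ᵥ (Ω⁻¹ *ᵥ z) = z ⬝ᵥ P⁻¹ *ᵥ v := by
    rw [Matrix.mulVec_mulVec, swap_dot, Matrix.transpose_mul, hAi_symm, hΩi_symm, hOiAi]
  have hzM : z ⬝ᵥ (Ω⁻¹ * (A⁻¹ * Ω⁻¹)) *ᵥ z = z ⬝ᵥ Ω⁻¹ *ᵥ z - σ * (z ⬝ᵥ M *ᵥ z) := by
    rw [hE3, Matrix.sub_mulVec, dotProduct_sub, Matrix.smul_mulVec,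
      dotProduct_smul, smul_eq_mul]
  have hzN : z ⬝ᵥ P⁻¹ *ᵥ v = N ⬝ᵥ z := by rw [hN', dotProduct_comm]
  have hbexp : b ⬝ᵥ A⁻¹ *ᵥ b
      = (z ⬝ᵥ Ω⁻¹ *ᵥ z - σ * (z ⬝ᵥ M *ᵥ z)) - σ * (N ⬝ᵥ z) - σ * (N ⬝ᵥ z)
        + σ * (σ * (v ⬝ᵥ A⁻¹ *ᵥ v)) := by
    rw [hbdef, Matrix.mulVec_sub, Matrix.mulVec_smul, dotProduct_sub, sub_dotProduct,
      sub_dotProduct, dotProduct_smul, smul_dotProduct, smul_dotProduct, dotProduct_smul]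
    rw [smul_eq_mul, smul_eq_mul, smul_eq_mul, smul_eq_mul]
    rw [ht1, ht2, ht3, hzM, hzN]
    ring
  have ht4 : v ⬝ᵥ (V + σ⁻¹ • Ω⁻¹)⁻¹ *ᵥ v = σ * (v ⬝ᵥ A⁻¹ *ᵥ v) := by
    rw [hVsinv, Matrix.smul_mulVec, dotProduct_smul, smul_eq_mul]
  have hexp2 : K + (1/2) * (b ⬝ᵥ A⁻¹ *ᵥ b)
      = -σ * ((1/2) * (z ⬝ᵥ M *ᵥ z) + N ⬝ᵥ z + vbar
          - (1/2) * (v ⬝ᵥ (V + σ⁻¹ • Ω⁻¹)⁻¹ *ᵥ v)) := by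
    rw [hbexp, ht4, hKdef]
    ring
  calc (C0 * Real.exp K) * ((2 * π) ^ ((n:ℝ)/2) * A.det ^ (-(1/2) : ℝ)
          * Real.exp ((1/2) * (b ⬝ᵥ A⁻¹ *ᵥ b)))
      = (C0 * ((2 * π) ^ ((n:ℝ)/2) * A.det ^ (-(1/2) : ℝ)))
          * (Real.exp K * Real.exp ((1/2) * (b ⬝ᵥ A⁻¹ *ᵥ b))) := by ring
    _ = Q.det ^ (-(1/2) : ℝ) * Real.exp (K + (1/2) * (b ⬝ᵥ A⁻¹ *ᵥ b)) := by
          rw [hpre, ← Real.exp_add]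
    _ = Q.det ^ (-(1/2) : ℝ) * Real.exp (-σ * ((1/2) * (z ⬝ᵥ M *ᵥ z) + N ⬝ᵥ z + vbar
            - (1/2) * (v ⬝ᵥ (V + σ⁻¹ • Ω⁻¹)⁻¹ *ᵥ v))) := by rw [hexp2]
end

section
/- Let n be a positive integer, σ > 0 a real number, Ω a symmetric positive definite n×n real matrix, V a symmetric invertible n×n real matrix such that σV + Ω⁻¹ is positive definite, v ∈ ℝ^n, v̄ ∈ ℝ, and z ∈ ℝ^n. Let E(z) = ∫_{ℝ^n} exp(−σ·((1/2)·xᵀVx + vᵀx + v̄)) · (det(2πΩ))^(−1/2) · exp(−(1/2)·(x − z)ᵀΩ⁻¹(x − z)) dx. Then E(z) > 0 and −σ⁻¹·ln E(z) = min over x ∈ ℝ^n of [(1/2)·xᵀVx + vᵀx + v̄ + (2σ)⁻¹·(x − z)ᵀΩ⁻¹(x − z)] + (2σ)⁻¹·ln det(I + σΩV). -/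
open MeasureTheory Matrix Real

private lemma std_gaussian_pi (n : ℕ) :
    ∫ y : Fin n → ℝ, Real.exp (-(1/2) * (y ⬝ᵥ y)) = Real.sqrt (2*π) ^ n := by
  have h : ∀ y : Fin n → ℝ, Real.exp (-(1/2) * (y ⬝ᵥ y))
      = ∏ i, Real.exp (-(1/2) * (y i ^ 2)) := by
    intro y
    rw [← Real.exp_sum]
    congr 1
    simp [dotProduct, Finset.mul_sum, sq]
  simp_rw [h]
  rw [MeasureTheory.volume_pi, MeasureTheory.integral_fintype_prod_eq_pow (ι := Fin n) (fun x : ℝ => Real.exp (-(1/2) * x ^ 2))]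
  have : ∫ x : ℝ, Real.exp (-(1/2) * x ^ 2) = Real.sqrt (2*π) := by
    rw [integral_gaussian]
    rw [show π / (1/2) = 2 * π by ring]
  rw [this, Fintype.card_fin]

private lemma integral_comp_mulVec_eq {n : ℕ} (g : (Fin n → ℝ) → ℝ) (S : Matrix (Fin n) (Fin n) ℝ)
    (hS : S.det ≠ 0) :
    ∫ x : Fin n → ℝ, g (S *ᵥ x) = |S.det|⁻¹ * ∫ y : Fin n → ℝ, g y := by
  have hinv : Invertible S := S.invertibleOfIsUnitDet (isUnit_iff_ne_zero.mpr hS)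
  let e : (Fin n → ℝ) ≃ₗ[ℝ] (Fin n → ℝ) := S.toLinearEquiv' hinv
  have hemb : MeasurableEmbedding (Matrix.toLin' S : (Fin n → ℝ) → (Fin n → ℝ)) := by
    have := (e.toContinuousLinearEquiv).toHomeomorph.measurableEmbedding
    convert this using 1
    rfl
  have hmap := Real.map_matrix_volume_pi_eq_smul_volume_pi (M := S) hS
  calc ∫ x : Fin n → ℝ, g (S *ᵥ x)
      = ∫ x : Fin n → ℝ, g (Matrix.toLin' S x) := by simp [Matrix.toLin'_apply]
    _ = ∫ y, g y ∂(Measure.map (Matrix.toLin' S) volume) := (hemb.integral_map g).symm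
    _ = ∫ y, g y ∂(ENNReal.ofReal |S.det|⁻¹ • volume) := by rw [hmap, abs_inv]
    _ = |S.det|⁻¹ * ∫ y, g y := by
        rw [integral_smul_measure, ENNReal.toReal_ofReal (by positivity), smul_eq_mul]

private lemma gaussian_integral_posDef {n : ℕ} {A : Matrix (Fin n) (Fin n) ℝ} (hA : A.PosDef) :
    ∫ x : Fin n → ℝ, Real.exp (-(1/2) * (x ⬝ᵥ A *ᵥ x))
      = Real.sqrt (2*π) ^ n / Real.sqrt A.det := by
  open scoped MatrixOrder in
  set S := CFC.sqrt A with hSdef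
  open scoped MatrixOrder in
  have hS2 : S * S = A := CFC.sqrt_mul_sqrt_self A hA.posSemidef.nonneg
  have hSsymm : Sᵀ = S := by
    open scoped MatrixOrder in
    have := (CFC.sqrt_nonneg A).posSemidef.isHermitian
    rwa [Matrix.IsHermitian, Matrix.conjTranspose_eq_transpose_of_trivial] at this
  have hdet2 : S.det * S.det = A.det := by rw [← Matrix.det_mul, hS2]
  have hAdetpos : 0 < A.det := hA.det_pos
  have hSdet_ne : S.det ≠ 0 := by
    intro h; rw [h, mul_zero] at hdet2; exact hAdetpos.ne (by linarith)
  have habs : |S.det| = Real.sqrt A.det := by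
    rw [← Real.sqrt_sq_eq_abs, sq, hdet2]
  have hquad : ∀ x : Fin n → ℝ, x ⬝ᵥ A *ᵥ x = (S *ᵥ x) ⬝ᵥ (S *ᵥ x) := by
    intro x
    rw [← hS2, ← Matrix.mulVec_mulVec, Matrix.dotProduct_mulVec]
    congr 1
    rw [← Matrix.mulVec_transpose, hSsymm]
  calc ∫ x : Fin n → ℝ, Real.exp (-(1/2) * (x ⬝ᵥ A *ᵥ x))
      = ∫ x : Fin n → ℝ, Real.exp (-(1/2) * ((S *ᵥ x) ⬝ᵥ (S *ᵥ x))) := by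
        congr 1; ext x; rw [hquad]
    _ = |S.det|⁻¹ * ∫ y : Fin n → ℝ, Real.exp (-(1/2) * (y ⬝ᵥ y)) :=
        integral_comp_mulVec_eq (fun y => Real.exp (-(1/2) * (y ⬝ᵥ y))) S hSdet_ne
    _ = Real.sqrt (2*π) ^ n / Real.sqrt A.det := by
        rw [std_gaussian_pi, habs, inv_mul_eq_div]

private lemma dot_sym {n : ℕ} {M : Matrix (Fin n) (Fin n) ℝ} (hM : Mᵀ = M) (a c : Fin n → ℝ) :
    a ⬝ᵥ M *ᵥ c = (M *ᵥ a) ⬝ᵥ c := by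
  rw [Matrix.dotProduct_mulVec]
  congr 1
  conv_lhs => rw [← hM]
  rw [Matrix.vecMul_transpose]

private lemma quad_expand {n : ℕ} {M : Matrix (Fin n) (Fin n) ℝ} (hM : Mᵀ = M) (a c : Fin n → ℝ) :
    (a - c) ⬝ᵥ M *ᵥ (a - c) = a ⬝ᵥ M *ᵥ a - 2 * ((M *ᵥ c) ⬝ᵥ a) + c ⬝ᵥ M *ᵥ c := by
  rw [sub_dotProduct, Matrix.mulVec_sub, dotProduct_sub, dotProduct_sub,
    dot_sym hM c a, dotProduct_comm a (M *ᵥ c)]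
  ring

private lemma sqrt_pow' (x : ℝ) (hx : 0 ≤ x) (n : ℕ) :
    Real.sqrt (x ^ n) = Real.sqrt x ^ n := by
  induction n with
  | zero => simp
  | succ k ih => rw [pow_succ, pow_succ, Real.sqrt_mul (pow_nonneg hx k), ih]


/-- **Whittle's exchange of expectation and minimization** for a quadratic under a Gaussian:
for `σ > 0`, `E(z) = E[exp (-σ q(x))]` with `x ~ N(z, Ω)` is positive and
`-σ⁻¹ ln E(z)` equals the minimum over `x` of the stress
`q(x) + (2σ)⁻¹ (x - z)ᵀ Ω⁻¹ (x - z)` plus `(2σ)⁻¹ ln det (I + σ Ω V)`. -/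
theorem risk_sensitive_transform_eq_min_stress
    (n : ℕ) (hn : 0 < n) (σ : ℝ) (hσ : 0 < σ)
    (Ω : Matrix (Fin n) (Fin n) ℝ) (hΩ_symm : Ω.IsSymm) (hΩ_pd : Ω.PosDef)
    (V : Matrix (Fin n) (Fin n) ℝ) (hV_symm : V.IsSymm) (hV_inv : IsUnit V.det)
    (hpd : (σ • V + Ω⁻¹).PosDef)
    (v : Fin n → ℝ) (vbar : ℝ) (z : Fin n → ℝ)
    (E : ℝ)
    (hE : E = ∫ x : Fin n → ℝ,
        Real.exp (-σ * ((1/2) * (x ⬝ᵥ V *ᵥ x) + v ⬝ᵥ x + vbar))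
          * (((2 * Real.pi) • Ω).det) ^ (-(1/2) : ℝ)
          * Real.exp (-(1/2) * ((x - z) ⬝ᵥ Ω⁻¹ *ᵥ (x - z)))) :
    0 < E ∧
    -σ⁻¹ * Real.log E
      = (⨅ x : Fin n → ℝ, ((1/2) * (x ⬝ᵥ V *ᵥ x) + v ⬝ᵥ x + vbar
          + (2*σ)⁻¹ * ((x - z) ⬝ᵥ Ω⁻¹ *ᵥ (x - z))))
        + (2*σ)⁻¹ * Real.log ((1 + σ • (Ω * V)).det) := by
  have hσ' : σ ≠ 0 := hσ.ne'
  set A : Matrix (Fin n) (Fin n) ℝ := σ • V + Ω⁻¹ with hAdef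
  have hAdet : 0 < A.det := hpd.det_pos
  have hΩdet : 0 < Ω.det := hΩ_pd.det_pos
  have hAsymm : Aᵀ = A := by
    have := hpd.1
    rwa [Matrix.IsHermitian, Matrix.conjTranspose_eq_transpose_of_trivial] at this
  have hΩisymm : (Ω⁻¹)ᵀ = Ω⁻¹ := by
    rw [Matrix.transpose_nonsing_inv, hΩ_symm]
  set b : Fin n → ℝ := σ • v - Ω⁻¹ *ᵥ z with hbdef
  set xs : Fin n → ℝ := -(A⁻¹ *ᵥ b) with hxsdef
  have hAxs : A *ᵥ xs = Ω⁻¹ *ᵥ z - σ • v := by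
    rw [hxsdef, Matrix.mulVec_neg, Matrix.mulVec_mulVec,
      Matrix.mul_nonsing_inv A (isUnit_iff_ne_zero.mpr hAdet.ne'), Matrix.one_mulVec, hbdef,
      neg_sub]
  set C : ℝ := σ * vbar + (1/2) * (z ⬝ᵥ Ω⁻¹ *ᵥ z) - (1/2) * (xs ⬝ᵥ A *ᵥ xs) with hCdef
  -- pointwise expansions
  have e1 : ∀ x : Fin n → ℝ, x ⬝ᵥ A *ᵥ x = σ * (x ⬝ᵥ V *ᵥ x) + x ⬝ᵥ Ω⁻¹ *ᵥ x := by
    intro x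
    rw [hAdef]
    simp [Matrix.add_mulVec, Matrix.smul_mulVec, dotProduct_add,
      dotProduct_smul, smul_eq_mul]
  -- the key completed-square identity
  have key : ∀ x : Fin n → ℝ,
      -σ * ((1/2) * (x ⬝ᵥ V *ᵥ x) + v ⬝ᵥ x + vbar)
        + (-(1/2) * ((x - z) ⬝ᵥ Ω⁻¹ *ᵥ (x - z)))
      = -(1/2) * ((x - xs) ⬝ᵥ A *ᵥ (x - xs)) + (-C) := by
    intro x
    have h2 : (A *ᵥ xs) ⬝ᵥ x = (Ω⁻¹ *ᵥ z) ⬝ᵥ x - σ * (v ⬝ᵥ x) := by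
      rw [hAxs, sub_dotProduct, smul_dotProduct, smul_eq_mul]
    have h3 := quad_expand hAsymm x xs
    have h4 := quad_expand hΩisymm x z
    have h5 : v ⬝ᵥ x = x ⬝ᵥ v := dotProduct_comm v x
    rw [h3, h4, e1 x, h2, hCdef, h5]
    ring
  set Kc : ℝ := (((2 * Real.pi) • Ω).det) ^ (-(1/2) : ℝ) with hKcdef
  have hint : ∀ x : Fin n → ℝ,
      Real.exp (-σ * ((1/2) * (x ⬝ᵥ V *ᵥ x) + v ⬝ᵥ x + vbar))
          * Kc * Real.exp (-(1/2) * ((x - z) ⬝ᵥ Ω⁻¹ *ᵥ (x - z)))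
      = (Kc * Real.exp (-C)) * Real.exp (-(1/2) * ((x - xs) ⬝ᵥ A *ᵥ (x - xs))) := by
    intro x
    rw [show Real.exp (-σ * ((1/2) * (x ⬝ᵥ V *ᵥ x) + v ⬝ᵥ x + vbar))
          * Kc * Real.exp (-(1/2) * ((x - z) ⬝ᵥ Ω⁻¹ *ᵥ (x - z)))
        = Kc * (Real.exp (-σ * ((1/2) * (x ⬝ᵥ V *ᵥ x) + v ⬝ᵥ x + vbar))
          * Real.exp (-(1/2) * ((x - z) ⬝ᵥ Ω⁻¹ *ᵥ (x - z)))) by ring,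
      ← Real.exp_add, key x, Real.exp_add]
    ring
  have hE1 : E = (Kc * Real.exp (-C)) * (Real.sqrt (2*π) ^ n / Real.sqrt A.det) := by
    rw [hE]
    calc ∫ x : Fin n → ℝ,
        Real.exp (-σ * ((1/2) * (x ⬝ᵥ V *ᵥ x) + v ⬝ᵥ x + vbar))
          * Kc * Real.exp (-(1/2) * ((x - z) ⬝ᵥ Ω⁻¹ *ᵥ (x - z)))
        = ∫ x : Fin n → ℝ,
            (Kc * Real.exp (-C)) * Real.exp (-(1/2) * ((x - xs) ⬝ᵥ A *ᵥ (x - xs))) := by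
          congr 1; ext x; exact hint x
      _ = (Kc * Real.exp (-C)) * ∫ x : Fin n → ℝ,
            Real.exp (-(1/2) * ((x - xs) ⬝ᵥ A *ᵥ (x - xs))) := by
          rw [MeasureTheory.integral_const_mul]
      _ = (Kc * Real.exp (-C)) * ∫ y : Fin n → ℝ, Real.exp (-(1/2) * (y ⬝ᵥ A *ᵥ y)) := by
          rw [MeasureTheory.integral_sub_right_eq_self
            (fun y : Fin n → ℝ => Real.exp (-(1/2) * (y ⬝ᵥ A *ᵥ y))) xs]
      _ = (Kc * Real.exp (-C)) * (Real.sqrt (2*π) ^ n / Real.sqrt A.det) := by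
          rw [gaussian_integral_posDef hpd]
  have h2π : (0:ℝ) ≤ 2 * π := by positivity
  have hKc : Kc = (Real.sqrt (2*π) ^ n * Real.sqrt Ω.det)⁻¹ := by
    rw [hKcdef, show ((2 * Real.pi) • Ω).det = (2*π)^n * Ω.det by
      rw [Matrix.det_smul, Fintype.card_fin],
      Real.rpow_neg (by positivity), ← Real.sqrt_eq_rpow,
      Real.sqrt_mul (by positivity), sqrt_pow' _ h2π]
  have hdetD : Ω.det * A.det = (1 + σ • (Ω * V)).det := by
    rw [← Matrix.det_mul]
    congr 1
    rw [hAdef, Matrix.mul_add, Matrix.mul_smul,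
      Matrix.mul_nonsing_inv Ω (isUnit_iff_ne_zero.mpr hΩdet.ne'), add_comm]
  have hDpos : 0 < (1 + σ • (Ω * V)).det := hdetD ▸ mul_pos hΩdet hAdet
  have hsqrt2π : (0:ℝ) < Real.sqrt (2*π) := Real.sqrt_pos.mpr (by positivity)
  have hE2 : E = Real.exp (-C) / Real.sqrt ((1 + σ • (Ω * V)).det) := by
    rw [hE1, hKc, ← hdetD, Real.sqrt_mul hΩdet.le]
    have h1 : Real.sqrt Ω.det ≠ 0 := (Real.sqrt_pos.mpr hΩdet).ne'
    have h2 : Real.sqrt A.det ≠ 0 := (Real.sqrt_pos.mpr hAdet).ne'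
    field_simp
  have hEpos : 0 < E := by
    rw [hE2]
    exact div_pos (Real.exp_pos _) (Real.sqrt_pos.mpr hDpos)
  have hQ0 : ∀ x : Fin n → ℝ, 0 ≤ (x - xs) ⬝ᵥ A *ᵥ (x - xs) := by
    intro x
    have := hpd.posSemidef.dotProduct_mulVec_nonneg (x - xs)
    simpa using this
  have hs : ∀ x : Fin n → ℝ,
      (1/2) * (x ⬝ᵥ V *ᵥ x) + v ⬝ᵥ x + vbar + (2*σ)⁻¹ * ((x - z) ⬝ᵥ Ω⁻¹ *ᵥ (x - z))
      = σ⁻¹ * ((1/2) * ((x - xs) ⬝ᵥ A *ᵥ (x - xs))) + σ⁻¹ * C := by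
    intro x
    have h3 : σ * (2*σ)⁻¹ = 1/2 := by
      field_simp
    have h2 : σ * ((1/2) * (x ⬝ᵥ V *ᵥ x) + v ⬝ᵥ x + vbar
        + (2*σ)⁻¹ * ((x - z) ⬝ᵥ Ω⁻¹ *ᵥ (x - z)))
        = (1/2) * ((x - xs) ⬝ᵥ A *ᵥ (x - xs)) + C := by
      linear_combination (-1 : ℝ) * key x + ((x - z) ⬝ᵥ Ω⁻¹ *ᵥ (x - z)) * h3
    have h4 : (1/2) * (x ⬝ᵥ V *ᵥ x) + v ⬝ᵥ x + vbar
        + (2*σ)⁻¹ * ((x - z) ⬝ᵥ Ω⁻¹ *ᵥ (x - z))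
        = σ⁻¹ * (σ * ((1/2) * (x ⬝ᵥ V *ᵥ x) + v ⬝ᵥ x + vbar
          + (2*σ)⁻¹ * ((x - z) ⬝ᵥ Ω⁻¹ *ᵥ (x - z)))) := by
      field_simp
    rw [h4, h2, mul_add]
  have hσinv : (0:ℝ) ≤ σ⁻¹ := (inv_pos.mpr hσ).le
  have hInf : (⨅ x : Fin n → ℝ, ((1/2) * (x ⬝ᵥ V *ᵥ x) + v ⬝ᵥ x + vbar
      + (2*σ)⁻¹ * ((x - z) ⬝ᵥ Ω⁻¹ *ᵥ (x - z)))) = σ⁻¹ * C := by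
    apply le_antisymm
    · have hbdd : BddBelow (Set.range fun x : Fin n → ℝ => ((1/2) * (x ⬝ᵥ V *ᵥ x) + v ⬝ᵥ x + vbar
          + (2*σ)⁻¹ * ((x - z) ⬝ᵥ Ω⁻¹ *ᵥ (x - z)))) := by
        refine ⟨σ⁻¹ * C, ?_⟩
        rintro y ⟨x, rfl⟩
        dsimp only
        rw [hs x]
        nlinarith [hQ0 x]
      refine (ciInf_le hbdd xs).trans_eq ?_
      rw [hs xs]
      simp
    · refine le_ciInf fun x => ?_
      rw [hs x]
      nlinarith [hQ0 x]
  constructor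
  · exact hEpos
  · rw [hInf, hE2, Real.log_div (Real.exp_ne_zero _) (Real.sqrt_pos.mpr hDpos).ne',
      Real.log_exp, Real.log_sqrt hDpos.le]
    field_simp
    ring
end

section
/- Let n, p, q be positive integers and σ a real number. Let P be a symmetric positive definite n×n real matrix, Ω a symmetric positive definite n×n matrix, Γ a symmetric positive definite q×q matrix, A an n×n matrix, B an n×p matrix, C a q×n matrix, f̄ ∈ ℝ^n, l_xx a symmetric n×n matrix, l_xu an n×p matrix, l_x ∈ ℝ^n, x̂ ∈ ℝ^n, δu ∈ ℝ^p, δy ∈ ℝ^q, and assume H⁻¹ := P⁻¹ + CᵀΓ⁻¹C + σ·l_xx is positive definite, with H its inverse. Define G = A·H·Cᵀ·Γ⁻¹, P' = Ω + A·H·Aᵀ, and x̂' = A·x̂ + B·δu + f̄ + G·(δy − C·x̂) − σ·A·H·(l_xx·x̂ + l_xu·δu + l_x). Then there exists a constant c ∈ ℝ (not depending on x') such that for every x' ∈ ℝ^n, the minimum over ξ ∈ ℝ^n of [σ·((1/2)·ξᵀ l_xx ξ + ξᵀ l_xu δu + l_xᵀξ) + (1/2)·(x' − Aξ − Bδu −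 f̄)ᵀΩ⁻¹(x' − Aξ − Bδu − f̄) + (1/2)·(δy − Cξ)ᵀΓ⁻¹(δy − Cξ) + (1/2)·(ξ − x̂)ᵀP⁻¹(ξ − x̂)] equals (1/2)·(x' − x̂')ᵀ(P')⁻¹(x' − x̂') + c; moreover P' is symmetric positive definite. -/
open Matrix

lemma sym_dot {k : ℕ} (N : Matrix (Fin k) (Fin k) ℝ) (hN : Nᵀ = N) (x y : Fin k → ℝ) :
    x ⬝ᵥ N *ᵥ y = y ⬝ᵥ N *ᵥ x := by
  rw [dotProduct_mulVec, ← mulVec_transpose, hN, dotProduct_comm]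

lemma dot_tmul {k l : ℕ} (D : Matrix (Fin k) (Fin l) ℝ) (x : Fin l → ℝ) (z : Fin k → ℝ) :
    (D *ᵥ x) ⬝ᵥ z = x ⬝ᵥ Dᵀ *ᵥ z := by
  rw [dotProduct_mulVec, vecMul_transpose]

lemma expand_sq {k : ℕ} (N : Matrix (Fin k) (Fin k) ℝ) (hN : Nᵀ = N) (x y : Fin k → ℝ) :
    (x - y) ⬝ᵥ N *ᵥ (x - y) = x ⬝ᵥ N *ᵥ x - 2 * (y ⬝ᵥ N *ᵥ x) + y ⬝ᵥ N *ᵥ y := by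
  rw [mulVec_sub, sub_dotProduct, dotProduct_sub, dotProduct_sub, sym_dot N hN x y]; ring

/-- **Theorem 4 of the paper (past-stress forward recursion).** One step of the
risk-sensitive forward recursion with imperfect observations: extremizing the previous state
`ξ` out of the sum of the σ-scaled running cost, the process-noise penalty, the
measurement-noise penalty and the previous past stress yields the updated quadratic past
stress `(1/2)(x' - x̂')ᵀ P'⁻¹ (x' - x̂')` up to a constant, with `P'` symmetric positive
definite. -/
theorem past_stress_forward_recursion
    (n p q : ℕ) (hn : 0 < n) (hp : 0 < p) (hq : 0 < q) (σ : ℝ)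
    (P : Matrix (Fin n) (Fin n) ℝ) (hP_symm : P.IsSymm) (hP_pd : P.PosDef)
    (Ω : Matrix (Fin n) (Fin n) ℝ) (hΩ_symm : Ω.IsSymm) (hΩ_pd : Ω.PosDef)
    (Γ : Matrix (Fin q) (Fin q) ℝ) (hΓ_symm : Γ.IsSymm) (hΓ_pd : Γ.PosDef)
    (A : Matrix (Fin n) (Fin n) ℝ) (B : Matrix (Fin n) (Fin p) ℝ)
    (C : Matrix (Fin q) (Fin n) ℝ) (fbar : Fin n → ℝ)
    (lxx : Matrix (Fin n) (Fin n) ℝ) (hlxx_symm : lxx.IsSymm)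
    (lxu : Matrix (Fin n) (Fin p) ℝ) (lx : Fin n → ℝ)
    (xhat : Fin n → ℝ) (δu : Fin p → ℝ) (δy : Fin q → ℝ)
    (hpd : (P⁻¹ + Cᵀ * Γ⁻¹ * C + σ • lxx).PosDef)
    (H : Matrix (Fin n) (Fin n) ℝ) (hH : H = (P⁻¹ + Cᵀ * Γ⁻¹ * C + σ • lxx)⁻¹)
    (G : Matrix (Fin n) (Fin q) ℝ) (hG : G = A * H * Cᵀ * Γ⁻¹)
    (P' : Matrix (Fin n) (Fin n) ℝ) (hP' : P' = Ω + A * H * Aᵀ)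
    (xhat' : Fin n → ℝ)
    (hxhat' : xhat' = A *ᵥ xhat + B *ᵥ δu + fbar + G *ᵥ (δy - C *ᵥ xhat)
        - σ • ((A * H) *ᵥ (lxx *ᵥ xhat + lxu *ᵥ δu + lx))) :
    (∃ c : ℝ, ∀ x' : Fin n → ℝ,
      IsLeast (Set.range (fun ξ : Fin n → ℝ =>
          σ * ((1/2) * (ξ ⬝ᵥ lxx *ᵥ ξ) + ξ ⬝ᵥ lxu *ᵥ δu + lx ⬝ᵥ ξ)
          + (1/2) * ((x' - A *ᵥ ξ - B *ᵥ δu - fbar) ⬝ᵥ Ω⁻¹ *ᵥ (x' - A *ᵥ ξ - B *ᵥ δu - fbar))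
          + (1/2) * ((δy - C *ᵥ ξ) ⬝ᵥ Γ⁻¹ *ᵥ (δy - C *ᵥ ξ))
          + (1/2) * ((ξ - xhat) ⬝ᵥ P⁻¹ *ᵥ (ξ - xhat))))
        ((1/2) * ((x' - xhat') ⬝ᵥ P'⁻¹ *ᵥ (x' - xhat')) + c)) ∧
    P'.IsSymm ∧ P'.PosDef := by
  classical
  have hPs : Pᵀ = P := hP_symm
  have hΩs : Ωᵀ = Ω := hΩ_symm
  have hΓs : Γᵀ = Γ := hΓ_symm
  have hlxxs : lxxᵀ = lxx := hlxx_symm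
  have hPit : (P⁻¹)ᵀ = P⁻¹ := by rw [transpose_nonsing_inv, hPs]
  have hΩit : (Ω⁻¹)ᵀ = Ω⁻¹ := by rw [transpose_nonsing_inv, hΩs]
  have hΓit : (Γ⁻¹)ᵀ = Γ⁻¹ := by rw [transpose_nonsing_inv, hΓs]
  set X : Matrix (Fin n) (Fin n) ℝ := Cᵀ * Γ⁻¹ * C with hX
  set L : Matrix (Fin n) (Fin n) ℝ := σ • lxx with hL
  set K : Matrix (Fin n) (Fin n) ℝ := P⁻¹ + X + L with hK
  have hK_pd : K.PosDef := hpd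
  have hKdet : IsUnit K.det := (isUnit_iff_isUnit_det K).mp hK_pd.isUnit
  have hHK : H * K = 1 := by rw [hH]; exact nonsing_inv_mul K hKdet
  have hKH : K * H = 1 := by rw [hH]; exact mul_nonsing_inv K hKdet
  have hH_pd : H.PosDef := by rw [hH]; exact hK_pd.inv
  have hKt : Kᵀ = K := by
    rw [hK, hX, hL]
    simp [transpose_add, transpose_smul, transpose_mul, Matrix.mul_assoc, hPit, hΓit, hlxxs]
  have hHt : Hᵀ = H := by rw [hH, transpose_nonsing_inv, hKt]
  set M : Matrix (Fin n) (Fin n) ℝ := Aᵀ * Ω⁻¹ * A + K with hM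
  have hM_pd : M.PosDef := by
    have h1 : (Aᵀ * Ω⁻¹ * A).PosSemidef := by
      have := (hΩ_pd.inv).posSemidef.conjTranspose_mul_mul_same A
      simpa [conjTranspose_eq_transpose_of_trivial] using this
    exact Matrix.PosDef.posSemidef_add h1 hK_pd
  have hMt : Mᵀ = M := by
    rw [hM]
    simp [transpose_add, transpose_mul, hΩit, hKt, Matrix.mul_assoc]
  have hMdet : IsUnit M.det := (isUnit_iff_isUnit_det M).mp hM_pd.isUnit
  have hMMi : M * M⁻¹ = 1 := mul_nonsing_inv M hMdet
  have hMiM : M⁻¹ * M = 1 := nonsing_inv_mul M hMdet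
  have hMit : (M⁻¹)ᵀ = M⁻¹ := by rw [transpose_nonsing_inv, hMt]
  have hΩdet : IsUnit Ω.det := (isUnit_iff_isUnit_det Ω).mp hΩ_pd.isUnit
  have hΩΩ : Ω * Ω⁻¹ = 1 := mul_nonsing_inv Ω hΩdet
  have hAHA : (A * H * Aᵀ).PosSemidef := by
    have := hH_pd.posSemidef.mul_mul_conjTranspose_same A
    simpa [conjTranspose_eq_transpose_of_trivial] using this
  have hP'_pd : P'.PosDef := by rw [hP']; exact hΩ_pd.add_posSemidef hAHA
  have hP't : P'ᵀ = P' := by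
    rw [hP']
    simp [transpose_add, transpose_mul, hΩs, hHt, Matrix.mul_assoc]
  have hP'it : (P'⁻¹)ᵀ = P'⁻¹ := by rw [transpose_nonsing_inv, hP't]
  have e1 : Aᵀ * Ω⁻¹ * A = M - K := by rw [hM]; abel
  have hWood : P'⁻¹ = Ω⁻¹ - Ω⁻¹ * A * M⁻¹ * Aᵀ * Ω⁻¹ := by
    apply inv_eq_right_inv
    calc P' * (Ω⁻¹ - Ω⁻¹ * A * M⁻¹ * Aᵀ * Ω⁻¹)
        = Ω * Ω⁻¹ + A * H * Aᵀ * Ω⁻¹ - (Ω * Ω⁻¹) * (A * M⁻¹ * Aᵀ * Ω⁻¹)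
          - A * H * ((Aᵀ * Ω⁻¹ * A) * (M⁻¹ * (Aᵀ * Ω⁻¹))) := by rw [hP']; noncomm_ring
      _ = 1 + A * H * Aᵀ * Ω⁻¹ - 1 * (A * M⁻¹ * Aᵀ * Ω⁻¹)
          - A * H * ((M - K) * (M⁻¹ * (Aᵀ * Ω⁻¹))) := by rw [hΩΩ, e1]
      _ = 1 + A * H * Aᵀ * Ω⁻¹ - A * M⁻¹ * Aᵀ * Ω⁻¹
          - (A * H * (M * M⁻¹) * (Aᵀ * Ω⁻¹) - A * (H * K) * (M⁻¹ * (Aᵀ * Ω⁻¹))) := by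
            noncomm_ring
      _ = 1 + A * H * Aᵀ * Ω⁻¹ - A * M⁻¹ * Aᵀ * Ω⁻¹
          - (A * H * 1 * (Aᵀ * Ω⁻¹) - A * 1 * (M⁻¹ * (Aᵀ * Ω⁻¹))) := by rw [hMMi, hHK]
      _ = 1 := by noncomm_ring
  have hlin : P'⁻¹ * (A * H) = Ω⁻¹ * A * M⁻¹ := by
    calc P'⁻¹ * (A * H)
        = (Ω⁻¹ - Ω⁻¹ * A * M⁻¹ * Aᵀ * Ω⁻¹) * (A * H) := by rw [hWood]
      _ = Ω⁻¹ * (A * H) - Ω⁻¹ * A * M⁻¹ * ((Aᵀ * Ω⁻¹ * A) * H) := by noncomm_ring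
      _ = Ω⁻¹ * (A * H) - Ω⁻¹ * A * M⁻¹ * ((M - K) * H) := by rw [e1]
      _ = Ω⁻¹ * (A * H) - (Ω⁻¹ * A * (M⁻¹ * M) * H - Ω⁻¹ * A * M⁻¹ * (K * H)) := by
            noncomm_ring
      _ = Ω⁻¹ * (A * H) - (Ω⁻¹ * A * 1 * H - Ω⁻¹ * A * M⁻¹ * 1) := by rw [hMiM, hKH]
      _ = Ω⁻¹ * A * M⁻¹ := by noncomm_ring
  have hAHP : A * H * P⁻¹ = A - A * H * X - A * H * L := by
    have e2 : P⁻¹ = K - X - L := by rw [hK]; abel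
    rw [e2, Matrix.mul_sub, Matrix.mul_sub, Matrix.mul_assoc A H K, hHK, Matrix.mul_one]
  set w : Fin n → ℝ := B *ᵥ δu + fbar with hw
  set d : Fin n → ℝ := Cᵀ *ᵥ (Γ⁻¹ *ᵥ δy) + P⁻¹ *ᵥ xhat - σ • (lxu *ᵥ δu + lx) with hd
  set e : Fin n → ℝ := xhat' - w with he
  have hAHd : (A * H) *ᵥ d = e := by
    rw [he, hxhat', hw, hd, hG, hX, hL] at *
    simp only [mulVec_add, mulVec_sub, mulVec_smul, Matrix.mulVec_mulVec, smul_add,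
      hAHP, sub_mulVec, hX, hL, smul_mulVec, Matrix.mul_smul, Matrix.mul_assoc]
    abel
  have hWv : ∀ z u' : Fin n → ℝ, u' ⬝ᵥ P'⁻¹ *ᵥ z
      = u' ⬝ᵥ Ω⁻¹ *ᵥ z - u' ⬝ᵥ Ω⁻¹ *ᵥ (A *ᵥ (M⁻¹ *ᵥ (Aᵀ *ᵥ (Ω⁻¹ *ᵥ z)))) := by
    intro z u'
    rw [hWood]
    simp only [sub_mulVec, dotProduct_sub, ← Matrix.mulVec_mulVec]
  have hgz : ∀ (u' : Fin n → ℝ) (z : Fin n → ℝ),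
      (Aᵀ *ᵥ (Ω⁻¹ *ᵥ u')) ⬝ᵥ z = u' ⬝ᵥ Ω⁻¹ *ᵥ (A *ᵥ z) := by
    intro u' z
    rw [dot_tmul, transpose_transpose, dot_tmul, hΩit]
  have hePu : ∀ u' : Fin n → ℝ,
      e ⬝ᵥ P'⁻¹ *ᵥ u' = u' ⬝ᵥ Ω⁻¹ *ᵥ (A *ᵥ (M⁻¹ *ᵥ d)) := by
    intro u'
    rw [sym_dot P'⁻¹ hP'it e u', ← hAHd, Matrix.mulVec_mulVec, hlin,
      ← Matrix.mulVec_mulVec, ← Matrix.mulVec_mulVec]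
  have star : ∀ u' : Fin n → ℝ,
      (1/2) * (u' ⬝ᵥ Ω⁻¹ *ᵥ u')
      = (1/2) * ((Aᵀ *ᵥ (Ω⁻¹ *ᵥ u') + d) ⬝ᵥ M⁻¹ *ᵥ (Aᵀ *ᵥ (Ω⁻¹ *ᵥ u') + d))
        + (1/2) * (u' ⬝ᵥ P'⁻¹ *ᵥ u') - e ⬝ᵥ P'⁻¹ *ᵥ u' - (1/2) * (d ⬝ᵥ M⁻¹ *ᵥ d) := by
    intro u'
    have h1 : (Aᵀ *ᵥ (Ω⁻¹ *ᵥ u') + d) ⬝ᵥ M⁻¹ *ᵥ (Aᵀ *ᵥ (Ω⁻¹ *ᵥ u') + d)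
        = u' ⬝ᵥ Ω⁻¹ *ᵥ (A *ᵥ (M⁻¹ *ᵥ (Aᵀ *ᵥ (Ω⁻¹ *ᵥ u'))))
          + 2 * (u' ⬝ᵥ Ω⁻¹ *ᵥ (A *ᵥ (M⁻¹ *ᵥ d))) + d ⬝ᵥ M⁻¹ *ᵥ d := by
      rw [mulVec_add, dotProduct_add, add_dotProduct, add_dotProduct,
        sym_dot M⁻¹ hMit d (Aᵀ *ᵥ (Ω⁻¹ *ᵥ u')),
        hgz u' (M⁻¹ *ᵥ (Aᵀ *ᵥ (Ω⁻¹ *ᵥ u'))), hgz u' (M⁻¹ *ᵥ d)]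
      ring
    rw [h1, hWv u' u', hePu u']
    ring
  set c : ℝ := (1/2) * (δy ⬝ᵥ Γ⁻¹ *ᵥ δy) + (1/2) * (xhat ⬝ᵥ P⁻¹ *ᵥ xhat)
      - (1/2) * (d ⬝ᵥ M⁻¹ *ᵥ d) - (1/2) * (e ⬝ᵥ P'⁻¹ *ᵥ e) with hc
  have I1 : ∀ v ξ : Fin n → ℝ,
      σ * ((1/2) * (ξ ⬝ᵥ lxx *ᵥ ξ) + ξ ⬝ᵥ lxu *ᵥ δu + lx ⬝ᵥ ξ)
      + (1/2) * ((v - A *ᵥ ξ - B *ᵥ δu - fbar) ⬝ᵥ Ω⁻¹ *ᵥ (v - A *ᵥ ξ - B *ᵥ δu - fbar))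
      + (1/2) * ((δy - C *ᵥ ξ) ⬝ᵥ Γ⁻¹ *ᵥ (δy - C *ᵥ ξ))
      + (1/2) * ((ξ - xhat) ⬝ᵥ P⁻¹ *ᵥ (ξ - xhat))
      = (1/2) * (ξ ⬝ᵥ M *ᵥ ξ) - (Aᵀ *ᵥ (Ω⁻¹ *ᵥ (v - w)) + d) ⬝ᵥ ξ
        + (1/2) * ((v - w) ⬝ᵥ Ω⁻¹ *ᵥ (v - w))
        + ((1/2) * (δy ⬝ᵥ Γ⁻¹ *ᵥ δy) + (1/2) * (xhat ⬝ᵥ P⁻¹ *ᵥ xhat)) := by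
    intro v ξ
    have h2 : v - A *ᵥ ξ - B *ᵥ δu - fbar = (v - w) - A *ᵥ ξ := by rw [hw]; abel
    rw [h2, expand_sq Ω⁻¹ hΩit (v - w) (A *ᵥ ξ), expand_sq Γ⁻¹ hΓit δy (C *ᵥ ξ),
      expand_sq P⁻¹ hPit ξ xhat, sym_dot P⁻¹ hPit xhat ξ,
      dot_tmul A ξ (Ω⁻¹ *ᵥ (v - w)), dot_tmul A ξ (Ω⁻¹ *ᵥ (A *ᵥ ξ)),
      dot_tmul C ξ (Γ⁻¹ *ᵥ δy), dot_tmul C ξ (Γ⁻¹ *ᵥ (C *ᵥ ξ)), hM, hK, hX, hL, hd]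
    simp only [add_mulVec, dotProduct_add, add_dotProduct, sub_dotProduct,
      smul_dotProduct, smul_mulVec, dotProduct_smul, smul_eq_mul,
      ← Matrix.mulVec_mulVec,
      dotProduct_comm (Aᵀ *ᵥ (Ω⁻¹ *ᵥ (v - w))) ξ,
      dotProduct_comm (Cᵀ *ᵥ (Γ⁻¹ *ᵥ δy)) ξ,
      dotProduct_comm (P⁻¹ *ᵥ xhat) ξ,
      dotProduct_comm (lxu *ᵥ δu) ξ]
    ring
  have master : ∀ v ξ : Fin n → ℝ,
      σ * ((1/2) * (ξ ⬝ᵥ lxx *ᵥ ξ) + ξ ⬝ᵥ lxu *ᵥ δu + lx ⬝ᵥ ξ)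
      + (1/2) * ((v - A *ᵥ ξ - B *ᵥ δu - fbar) ⬝ᵥ Ω⁻¹ *ᵥ (v - A *ᵥ ξ - B *ᵥ δu - fbar))
      + (1/2) * ((δy - C *ᵥ ξ) ⬝ᵥ Γ⁻¹ *ᵥ (δy - C *ᵥ ξ))
      + (1/2) * ((ξ - xhat) ⬝ᵥ P⁻¹ *ᵥ (ξ - xhat))
      = (1/2) * ((v - xhat') ⬝ᵥ P'⁻¹ *ᵥ (v - xhat')) + c
        + (1/2) * ((ξ - M⁻¹ *ᵥ (Aᵀ *ᵥ (Ω⁻¹ *ᵥ (v - w)) + d)) ⬝ᵥ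
            M *ᵥ (ξ - M⁻¹ *ᵥ (Aᵀ *ᵥ (Ω⁻¹ *ᵥ (v - w)) + d))) := by
    intro v ξ
    have hc2 : ∀ z : Fin n → ℝ,
        (M⁻¹ *ᵥ (Aᵀ *ᵥ (Ω⁻¹ *ᵥ (v - w)) + d)) ⬝ᵥ M *ᵥ z
        = (Aᵀ *ᵥ (Ω⁻¹ *ᵥ (v - w)) + d) ⬝ᵥ z := by
      intro z
      rw [sym_dot M hMt, Matrix.mulVec_mulVec, hMMi, one_mulVec, dotProduct_comm]
    have h4 : v - xhat' = (v - w) - e := by rw [he]; abel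
    rw [I1 v ξ, h4, expand_sq P'⁻¹ hP'it (v - w) e,
      expand_sq M hMt ξ (M⁻¹ *ᵥ (Aᵀ *ᵥ (Ω⁻¹ *ᵥ (v - w)) + d)),
      hc2 ξ, hc2 (M⁻¹ *ᵥ (Aᵀ *ᵥ (Ω⁻¹ *ᵥ (v - w)) + d)), hc]
    linear_combination star (v - w)
  refine ⟨⟨c, fun v => ⟨⟨M⁻¹ *ᵥ (Aᵀ *ᵥ (Ω⁻¹ *ᵥ (v - w)) + d), ?_⟩, ?_⟩⟩, hP't, hP'_pd⟩
  · simpa using master v (M⁻¹ *ᵥ (Aᵀ *ᵥ (Ω⁻¹ *ᵥ (v - w)) + d))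
  · rintro r ⟨ξ, rfl⟩
    have h0 : 0 ≤ (ξ - M⁻¹ *ᵥ (Aᵀ *ᵥ (Ω⁻¹ *ᵥ (v - w)) + d)) ⬝ᵥ
        M *ᵥ (ξ - M⁻¹ *ᵥ (Aᵀ *ᵥ (Ω⁻¹ *ᵥ (v - w)) + d)) := by
      have := hM_pd.posSemidef.dotProduct_mulVec_nonneg (ξ - M⁻¹ *ᵥ (Aᵀ *ᵥ (Ω⁻¹ *ᵥ (v - w)) + d))
      simpa using this
    have hm := master v ξ
    dsimp only
    linarith [hm, h0]
end

section
/- Let n be a positive integer, σ ≠ 0 a real number, P a symmetric positive definite n×n real matrix, V a symmetric n×n matrix, v ∈ ℝ^n, x̂ ∈ ℝ^n, and assume σ⁻¹P⁻¹ + V is positive definite. Then the matrix I + σPV is invertible, and the function x ↦ σ⁻¹·(1/2)·(x − x̂)ᵀP⁻¹(x − x̂) + (1/2)·xᵀVx + vᵀx attains its unique global minimum on ℝ^n at x̌ = (I + σPV)⁻¹·(x̂ − σPv). -/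
open Matrix

/-- **Minimum-stress state estimate (equation (33) of the paper):** with `P` symmetric
positive definite, `V` symmetric and `σ⁻¹ P⁻¹ + V` positive definite, the matrix
`I + σ P V` is invertible and the total stress
`x ↦ σ⁻¹ (1/2)(x - x̂)ᵀ P⁻¹ (x - x̂) + (1/2) xᵀ V x + vᵀ x` attains its unique global
minimum at `x̌ = (I + σ P V)⁻¹ (x̂ - σ P v)`. -/
theorem minimum_stress_estimate
    (n : ℕ) (hn : 0 < n) (σ : ℝ) (hσ : σ ≠ 0)
    (P : Matrix (Fin n) (Fin n) ℝ) (hP_symm : P.IsSymm) (hP_pd : P.PosDef)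
    (V : Matrix (Fin n) (Fin n) ℝ) (hV_symm : V.IsSymm)
    (v : Fin n → ℝ) (xhat : Fin n → ℝ)
    (hpd : (σ⁻¹ • P⁻¹ + V).PosDef)
    (g : (Fin n → ℝ) → ℝ)
    (hg : ∀ x, g x = σ⁻¹ * ((1/2) * ((x - xhat) ⬝ᵥ P⁻¹ *ᵥ (x - xhat)))
        + (1/2) * (x ⬝ᵥ V *ᵥ x) + v ⬝ᵥ x)
    (xcheck : Fin n → ℝ)
    (hxcheck : xcheck = (1 + σ • (P * V))⁻¹ *ᵥ (xhat - σ • (P *ᵥ v))) :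
    IsUnit (1 + σ • (P * V)).det ∧
    ∀ x : Fin n → ℝ, x ≠ xcheck → g xcheck < g x := by
  set A : Matrix (Fin n) (Fin n) ℝ := σ⁻¹ • P⁻¹ + V with hA
  have hPdet : IsUnit P.det := isUnit_iff_ne_zero.2 hP_pd.det_pos.ne'
  have hAdet : IsUnit A.det := isUnit_iff_ne_zero.2 hpd.det_pos.ne'
  have hM : (1 : Matrix (Fin n) (Fin n) ℝ) + σ • (P * V) = σ • (P * A) := by
    rw [hA, Matrix.mul_add, Matrix.mul_smul, smul_add, smul_smul,
      mul_inv_cancel₀ hσ, one_smul, Matrix.mul_nonsing_inv P hPdet]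
  have hMdet : IsUnit (1 + σ • (P * V)).det := by
    rw [hM, Matrix.det_smul, Matrix.det_mul]
    exact (isUnit_iff_ne_zero.2 (pow_ne_zero _ hσ)).mul (hPdet.mul hAdet)
  refine ⟨hMdet, ?_⟩
  have hMx : (1 + σ • (P * V)) *ᵥ xcheck = xhat - σ • (P *ᵥ v) := by
    rw [hxcheck, Matrix.mulVec_mulVec, Matrix.mul_nonsing_inv _ hMdet, Matrix.one_mulVec]
  have hstat : A *ᵥ xcheck = σ⁻¹ • (P⁻¹ *ᵥ xhat) - v := by
    rw [hM] at hMx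
    have h1 : σ • (P *ᵥ (A *ᵥ xcheck)) = xhat - σ • (P *ᵥ v) := by
      rw [← hMx, Matrix.smul_mulVec, Matrix.mulVec_mulVec]
    have h3 : σ • (A *ᵥ xcheck) = P⁻¹ *ᵥ xhat - σ • v := by
      have h2 := congrArg (fun w => P⁻¹ *ᵥ w) h1
      simp only [Matrix.mulVec_smul] at h2
      rw [Matrix.mulVec_mulVec, Matrix.nonsing_inv_mul P hPdet, Matrix.one_mulVec,
        Matrix.mulVec_sub, Matrix.mulVec_smul, Matrix.mulVec_mulVec,
        Matrix.nonsing_inv_mul P hPdet, Matrix.one_mulVec] at h2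
      exact h2
    calc A *ᵥ xcheck = σ⁻¹ • (σ • (A *ᵥ xcheck)) := by
          rw [smul_smul, inv_mul_cancel₀ hσ, one_smul]
      _ = σ⁻¹ • (P⁻¹ *ᵥ xhat) - v := by
          rw [h3, smul_sub, smul_smul, inv_mul_cancel₀ hσ, one_smul]
  have hPi_symm : (P⁻¹).IsSymm := by
    rw [Matrix.IsSymm, transpose_nonsing_inv, hP_symm.eq]
  have hA_symm : A.IsSymm := by
    rw [hA, Matrix.IsSymm, Matrix.transpose_add, Matrix.transpose_smul,
      hPi_symm.eq, hV_symm.eq]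
  have symm : ∀ (B : Matrix (Fin n) (Fin n) ℝ), B.IsSymm → ∀ a b : Fin n → ℝ,
      a ⬝ᵥ B *ᵥ b = b ⬝ᵥ B *ᵥ a := by
    intro B hB a b
    rw [dotProduct_mulVec, ← mulVec_transpose, hB.eq, dotProduct_comm]
  have key : ∀ x : Fin n → ℝ,
      g x = g xcheck + (1/2) * ((x - xcheck) ⬝ᵥ A *ᵥ (x - xcheck)) := by
    intro x
    have e1 : x ⬝ᵥ A *ᵥ xcheck = σ⁻¹ * (x ⬝ᵥ P⁻¹ *ᵥ xhat) - v ⬝ᵥ x := by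
      rw [hstat, dotProduct_sub, dotProduct_smul, smul_eq_mul, dotProduct_comm x v]
    have e2 : xcheck ⬝ᵥ A *ᵥ xcheck
        = σ⁻¹ * (xcheck ⬝ᵥ P⁻¹ *ᵥ xhat) - v ⬝ᵥ xcheck := by
      rw [hstat, dotProduct_sub, dotProduct_smul, smul_eq_mul, dotProduct_comm xcheck v]
    have e3 : ∀ a b : Fin n → ℝ, a ⬝ᵥ A *ᵥ b
        = σ⁻¹ * (a ⬝ᵥ P⁻¹ *ᵥ b) + a ⬝ᵥ V *ᵥ b := by
      intro a b
      rw [hA, Matrix.add_mulVec, dotProduct_add, Matrix.smul_mulVec,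
        dotProduct_smul, smul_eq_mul]
    have ecc : σ⁻¹ * (xcheck ⬝ᵥ P⁻¹ *ᵥ xcheck) + xcheck ⬝ᵥ V *ᵥ xcheck
        = σ⁻¹ * (xcheck ⬝ᵥ P⁻¹ *ᵥ xhat) - v ⬝ᵥ xcheck :=
      (e3 xcheck xcheck).symm.trans e2
    have hsub : ∀ (B : Matrix (Fin n) (Fin n) ℝ) (a b : Fin n → ℝ),
        (a - b) ⬝ᵥ B *ᵥ (a - b)
          = a ⬝ᵥ B *ᵥ a - a ⬝ᵥ B *ᵥ b - b ⬝ᵥ B *ᵥ a + b ⬝ᵥ B *ᵥ b := by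
      intro B a b
      simp only [Matrix.mulVec_sub, dotProduct_sub, sub_dotProduct]
      ring
    rw [hg, hg, hsub P⁻¹ x xhat, hsub P⁻¹ xcheck xhat, hsub A x xcheck,
      symm P⁻¹ hPi_symm xhat x, symm P⁻¹ hPi_symm xhat xcheck,
      symm A hA_symm xcheck x, e1, e2, e3 x x]
    linear_combination -ecc / 2
  intro x hx
  have hpos : 0 < (x - xcheck) ⬝ᵥ A *ᵥ (x - xcheck) :=
    by have := hpd.dotProduct_mulVec_pos (sub_ne_zero.2 hx); rwa [star_trivial] at this
  have := key x
  linarith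
end

section
/- Let n, p be positive integers, T ≥ 1 an integer, and σ > 0 a real number. For t = 0,…,T−1 let A(t) be an n×n real matrix, B(t) an n×p matrix, f̄(t+1) ∈ ℝ^n, Ω(t+1) a symmetric positive definite n×n matrix, and let l_t(δx,δu) = (1/2)·δxᵀ l_xx(t) δx + δuᵀ l_ux(t) δx + (1/2)·δuᵀ l_uu(t) δu + l_x(t)ᵀδx + l_u(t)ᵀδu with l_xx(t), l_uu(t) symmetric; let l_xx(T) be symmetric and l_x(T) ∈ ℝ^n. Define the future stress functions backward by F_T(x) = (1/2)·xᵀ l_xx(T) x + l_x(T)ᵀx and, for t = T−1,…,0, F_t(x) = inf over δu ∈ ℝ^p and x' ∈ ℝ^n of [l_t(x,δu) + (2σ)⁻¹·(x' − A(t)x − B(t)δu − f̄(t+1))ᵀΩ(t+1)⁻¹(x' − A(t)x − B(t)δu − f̄(t+1)) + F_{t+1}(x')]. Suppose that, in the backward recursion V(T) = l_xx(T), v(T) = l_x(T), v̄(T) = 0; M(t) = (σΩ(t+1) + V(t+1)⁻¹)⁻¹, N(t) = v(t+1) − σM(t)Ω(t+1)v(t+1); Q_x(t) = l_x(t) + A(t)ᵀM(t)f̄(t+1)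 + A(t)ᵀN(t), Q_u(t) = l_u(t) + B(t)ᵀN(t) + B(t)ᵀM(t)f̄(t+1), Q_uu(t) = l_uu(t) + B(t)ᵀM(t)B(t), Q_ux(t) = l_ux(t) + B(t)ᵀM(t)A(t), Q_xx(t) = l_xx(t) + A(t)ᵀM(t)A(t); V(t) = Q_xx(t) − Q_ux(t)ᵀQ_uu(t)⁻¹Q_ux(t), v(t) = Q_x(t) − Q_ux(t)ᵀQ_uu(t)⁻¹Q_u(t), v̄(t) = v̄(t+1) + f̄(t+1)ᵀN(t) + (1/2)·f̄(t+1)ᵀM(t)f̄(t+1) − (1/2)·v(t+1)ᵀ(V(t+1) + σ⁻¹Ω(t+1)⁻¹)⁻¹v(t+1) − (1/2)·Q_u(t)ᵀQ_uu(t)⁻¹Q_u(t), it holds for every t that V(t+1) is invertible, σ⁻¹Ω(t+1)⁻¹ + V(t+1) is positive definite, and Q_uu(t) is positive definite. Then for every t = 0,…,T and every x ∈ ℝ^n, the infimum defining F_t(x) is attained and F_t(x) = (1/2)·xᵀV(t)x + v(t)ᵀx + v̄(t). -/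
open Matrix BigOperators


lemma pd_unit {k : ℕ} {H : Matrix (Fin k) (Fin k) ℝ} (h : H.PosDef) : IsUnit H.det :=
  isUnit_iff_ne_zero.mpr h.det_pos.ne'

lemma pd_symm {k : ℕ} {H : Matrix (Fin k) (Fin k) ℝ} (h : H.PosDef) : Hᵀ = H := by
  have := h.isHermitian.eq
  simpa [Matrix.conjTranspose_eq_transpose_of_trivial] using this

lemma dot_shift {k m : ℕ} (A : Matrix (Fin k) (Fin m) ℝ) (u : Fin k → ℝ) (w : Fin m → ℝ) :
    u ⬝ᵥ A *ᵥ w = (Aᵀ *ᵥ u) ⬝ᵥ w := by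
  rw [Matrix.dotProduct_mulVec, ← Matrix.mulVec_transpose]

lemma dot_sym_s13 {k : ℕ} {A : Matrix (Fin k) (Fin k) ℝ} (h : Aᵀ = A) (u w : Fin k → ℝ) :
    u ⬝ᵥ A *ᵥ w = w ⬝ᵥ A *ᵥ u := by
  rw [dot_shift, h, dotProduct_comm]

lemma mv_dot {k m : ℕ} (Bm : Matrix (Fin k) (Fin m) ℝ) (du : Fin m → ℝ) (z : Fin k → ℝ) :
    (Bm *ᵥ du) ⬝ᵥ z = du ⬝ᵥ (Bmᵀ *ᵥ z) := by
  rw [dot_shift Bmᵀ du z, Matrix.transpose_transpose]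

lemma dot_expand2 {k : ℕ} {W : Matrix (Fin k) (Fin k) ℝ} (hWs : Wᵀ = W) (u v : Fin k → ℝ) :
    (u + v) ⬝ᵥ W *ᵥ (u + v)
      = u ⬝ᵥ W *ᵥ u + v ⬝ᵥ W *ᵥ v + 2 * (u ⬝ᵥ W *ᵥ v) := by
  simp only [Matrix.mulVec_add, dotProduct_add, add_dotProduct]
  rw [dot_sym_s13 hWs v u]
  ring

lemma dot_expand3 {k : ℕ} {W : Matrix (Fin k) (Fin k) ℝ} (hWs : Wᵀ = W) (u v w : Fin k → ℝ) :
    (u + v + w) ⬝ᵥ W *ᵥ (u + v + w)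
      = u ⬝ᵥ W *ᵥ u + v ⬝ᵥ W *ᵥ v + w ⬝ᵥ W *ᵥ w
        + 2 * (v ⬝ᵥ W *ᵥ u) + 2 * (u ⬝ᵥ W *ᵥ w) + 2 * (v ⬝ᵥ W *ᵥ w) := by
  simp only [Matrix.mulVec_add, dotProduct_add, add_dotProduct]
  rw [dot_sym_s13 hWs u v, dot_sym_s13 hWs w u, dot_sym_s13 hWs w v]
  ring
lemma complete_square {k : ℕ} {H : Matrix (Fin k) (Fin k) ℝ} (hs : Hᵀ = H)
    (hu : IsUnit H.det) (b : Fin k → ℝ) (c : ℝ) (y : Fin k → ℝ) :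
    2⁻¹ * (y ⬝ᵥ H *ᵥ y) + b ⬝ᵥ y + c
      = 2⁻¹ * ((y + H⁻¹ *ᵥ b) ⬝ᵥ H *ᵥ (y + H⁻¹ *ᵥ b)) + (c - 2⁻¹ * (b ⬝ᵥ H⁻¹ *ᵥ b)) := by
  have hHz : H *ᵥ (H⁻¹ *ᵥ b) = b := by
    rw [Matrix.mulVec_mulVec, Matrix.mul_nonsing_inv H hu, Matrix.one_mulVec]
  have e2 : (H⁻¹ *ᵥ b) ⬝ᵥ H *ᵥ y = b ⬝ᵥ y := by
    rw [dot_sym_s13 hs, hHz, dotProduct_comm]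
  have e1 : (y + H⁻¹ *ᵥ b) ⬝ᵥ H *ᵥ (y + H⁻¹ *ᵥ b)
      = y ⬝ᵥ H *ᵥ y + b ⬝ᵥ y + b ⬝ᵥ y + b ⬝ᵥ H⁻¹ *ᵥ b := by
    rw [Matrix.mulVec_add, hHz]
    simp only [dotProduct_add, add_dotProduct, e2]
    rw [dotProduct_comm y b, dotProduct_comm (H⁻¹ *ᵥ b) b]
    ring
  rw [e1]; ring

lemma quad_lb {k : ℕ} {H : Matrix (Fin k) (Fin k) ℝ} (h : H.PosDef)
    (b : Fin k → ℝ) (c : ℝ) (y : Fin k → ℝ) :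
    c - 2⁻¹ * (b ⬝ᵥ H⁻¹ *ᵥ b) ≤ 2⁻¹ * (y ⬝ᵥ H *ᵥ y) + b ⬝ᵥ y + c := by
  rw [complete_square (pd_symm h) (pd_unit h) b c y]
  have h0 : 0 ≤ (y + H⁻¹ *ᵥ b) ⬝ᵥ H *ᵥ (y + H⁻¹ *ᵥ b) := by
    simpa using h.posSemidef.dotProduct_mulVec_nonneg (y + H⁻¹ *ᵥ b)
  nlinarith [h0]

lemma quad_min {k : ℕ} {H : Matrix (Fin k) (Fin k) ℝ} (h : H.PosDef)
    (b : Fin k → ℝ) (c : ℝ) :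
    2⁻¹ * ((-(H⁻¹ *ᵥ b)) ⬝ᵥ H *ᵥ (-(H⁻¹ *ᵥ b))) + b ⬝ᵥ (-(H⁻¹ *ᵥ b)) + c
      = c - 2⁻¹ * (b ⬝ᵥ H⁻¹ *ᵥ b) := by
  rw [complete_square (pd_symm h) (pd_unit h) b c (-(H⁻¹ *ᵥ b)), neg_add_cancel]
  simp

section ids
variable {n : ℕ} {σ : ℝ} {Ω V' D H1 M : Matrix (Fin n) (Fin n) ℝ}

lemma idM (hσ : 0 < σ) (hΩD : Ω * D = 1) (hV'u : IsUnit V'.det)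
    (hH1d : H1 = σ⁻¹ • D + V') (hH1u : IsUnit H1.det)
    (hM : M = (σ • Ω + V'⁻¹)⁻¹) : M = σ⁻¹ • (D * (H1⁻¹ * V')) := by
  have hσ0 : σ ≠ 0 := hσ.ne'
  rw [hM]
  apply Matrix.inv_eq_right_inv
  calc (σ • Ω + V'⁻¹) * (σ⁻¹ • (D * (H1⁻¹ * V')))
      = (σ * σ⁻¹) • (Ω * (D * (H1⁻¹ * V'))) + σ⁻¹ • (V'⁻¹ * (D * (H1⁻¹ * V'))) := by
        rw [Matrix.add_mul, smul_mul_assoc, mul_smul_comm, mul_smul_comm, smul_smul]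
    _ = H1⁻¹ * V' + V'⁻¹ * (σ⁻¹ • (D * (H1⁻¹ * V'))) := by
        rw [mul_inv_cancel₀ hσ0, one_smul, ← Matrix.mul_assoc Ω D, hΩD, Matrix.one_mul,
          mul_smul_comm]
    _ = V'⁻¹ * (V' * (H1⁻¹ * V') + σ⁻¹ • (D * (H1⁻¹ * V'))) := by
        rw [Matrix.mul_add, ← Matrix.mul_assoc V'⁻¹ V', Matrix.nonsing_inv_mul V' hV'u,
          Matrix.one_mul]
    _ = V'⁻¹ * (H1 * (H1⁻¹ * V')) := by
        rw [hH1d, Matrix.add_mul, smul_mul_assoc, add_comm]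
    _ = 1 := by
        rw [← Matrix.mul_assoc H1, Matrix.mul_nonsing_inv H1 hH1u, Matrix.one_mul,
          Matrix.nonsing_inv_mul V' hV'u]

lemma idI2 (hσ : 0 < σ) (hΩD : Ω * D = 1) (hDΩ : D * Ω = 1) (hV'u : IsUnit V'.det)
    (hH1d : H1 = σ⁻¹ • D + V') (hH1u : IsUnit H1.det)
    (hM : M = (σ • Ω + V'⁻¹)⁻¹) : σ⁻¹ • (D * H1⁻¹) = 1 - σ • (M * Ω) := by
  have hσ0 : σ ≠ 0 := hσ.ne'
  have h1 : σ • (M * Ω) = D * (H1⁻¹ * (V' * Ω)) := by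
    rw [idM hσ hΩD hV'u hH1d hH1u hM, smul_mul_assoc, smul_smul, mul_inv_cancel₀ hσ0,
      one_smul, Matrix.mul_assoc, Matrix.mul_assoc]
  have h2 : σ⁻¹ • (D * H1⁻¹) + D * (H1⁻¹ * (V' * Ω)) = 1 := by
    have e0 : σ⁻¹ • (1 : Matrix (Fin n) (Fin n) ℝ) + V' * Ω = H1 * Ω := by
      rw [hH1d, Matrix.add_mul, smul_mul_assoc, hDΩ]
    calc σ⁻¹ • (D * H1⁻¹) + D * (H1⁻¹ * (V' * Ω))
        = D * (H1⁻¹ * (σ⁻¹ • 1 + V' * Ω)) := by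
          rw [Matrix.mul_add, Matrix.mul_add, mul_smul_comm, mul_smul_comm, Matrix.mul_one]
      _ = 1 := by
          rw [e0, ← Matrix.mul_assoc H1⁻¹, Matrix.nonsing_inv_mul H1 hH1u, Matrix.one_mul,
            hDΩ]
  rw [h1]
  exact eq_sub_of_add_eq h2

lemma idI1 (hσ : 0 < σ) (hΩD : Ω * D = 1) (hDΩ : D * Ω = 1) (hV'u : IsUnit V'.det)
    (hH1d : H1 = σ⁻¹ • D + V') (hH1u : IsUnit H1.det)
    (hM : M = (σ • Ω + V'⁻¹)⁻¹) :
    (σ⁻¹ * σ⁻¹) • (D * (H1⁻¹ * D)) = σ⁻¹ • D - M := by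
  have hσ0 : σ ≠ 0 := hσ.ne'
  have h1 : (σ⁻¹ * σ⁻¹) • (D * (H1⁻¹ * D)) = (σ⁻¹ • (D * H1⁻¹)) * (σ⁻¹ • D) := by
    rw [smul_mul_assoc, mul_smul_comm, smul_smul, Matrix.mul_assoc]
  rw [h1, idI2 hσ hΩD hDΩ hV'u hH1d hH1u hM, Matrix.sub_mul, Matrix.one_mul,
    smul_mul_assoc, mul_smul_comm, smul_smul, mul_inv_cancel₀ hσ0, one_smul,
    Matrix.mul_assoc, hΩD, Matrix.mul_one]
end ids

lemma step_isLeast {n p : ℕ} {σ : ℝ} (hσ : 0 < σ)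
    (A : Matrix (Fin n) (Fin n) ℝ) (B : Matrix (Fin n) (Fin p) ℝ) (f : Fin n → ℝ)
    (Ω : Matrix (Fin n) (Fin n) ℝ) (hΩ : Ω.PosDef)
    (lxx : Matrix (Fin n) (Fin n) ℝ)
    (lux : Matrix (Fin p) (Fin n) ℝ) (luu : Matrix (Fin p) (Fin p) ℝ)
    (lx : Fin n → ℝ) (lu : Fin p → ℝ)
    (V' : Matrix (Fin n) (Fin n) ℝ) (hV'u : IsUnit V'.det)
    (v' : Fin n → ℝ) (vbar' : ℝ)
    (hH1pd : (σ⁻¹ • Ω⁻¹ + V').PosDef)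
    (M : Matrix (Fin n) (Fin n) ℝ) (hM : M = (σ • Ω + V'⁻¹)⁻¹) (hMs : Mᵀ = M)
    (N : Fin n → ℝ) (hN : N = v' - σ • ((M * Ω) *ᵥ v'))
    (Qx : Fin n → ℝ) (hQx : Qx = lx + Aᵀ *ᵥ (M *ᵥ f) + Aᵀ *ᵥ N)
    (Qu : Fin p → ℝ) (hQu : Qu = lu + Bᵀ *ᵥ N + Bᵀ *ᵥ (M *ᵥ f))
    (Quu : Matrix (Fin p) (Fin p) ℝ) (hQuu : Quu = luu + Bᵀ * M * B) (hQuu_pd : Quu.PosDef)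
    (Qux : Matrix (Fin p) (Fin n) ℝ) (hQux : Qux = lux + Bᵀ * M * A)
    (Qxx : Matrix (Fin n) (Fin n) ℝ) (hQxx : Qxx = lxx + Aᵀ * M * A)
    (V0 : Matrix (Fin n) (Fin n) ℝ) (hV0 : V0 = Qxx - Quxᵀ * Quu⁻¹ * Qux)
    (v0 : Fin n → ℝ) (hv0 : v0 = Qx - (Quxᵀ * Quu⁻¹) *ᵥ Qu)
    (vbar0 : ℝ) (hvbar0 : vbar0 = vbar' + f ⬝ᵥ N + (1/2) * (f ⬝ᵥ M *ᵥ f)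
        - (1/2) * (v' ⬝ᵥ (V' + σ⁻¹ • Ω⁻¹)⁻¹ *ᵥ v')
        - (1/2) * (Qu ⬝ᵥ Quu⁻¹ *ᵥ Qu))
    (x : Fin n → ℝ) (G : ((Fin p → ℝ) × (Fin n → ℝ)) → ℝ)
    (hG : ∀ δu x', G (δu, x') =
        ((1/2) * (x ⬝ᵥ lxx *ᵥ x) + δu ⬝ᵥ lux *ᵥ x + (1/2) * (δu ⬝ᵥ luu *ᵥ δu)
            + lx ⬝ᵥ x + lu ⬝ᵥ δu)
        + (2*σ)⁻¹ * ((x' - A *ᵥ x - B *ᵥ δu - f) ⬝ᵥ Ω⁻¹ *ᵥ (x' - A *ᵥ x - B *ᵥ δu - f))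
        + ((1/2) * (x' ⬝ᵥ V' *ᵥ x') + v' ⬝ᵥ x' + vbar')) :
    IsLeast (Set.range G) ((1/2) * (x ⬝ᵥ V0 *ᵥ x) + v0 ⬝ᵥ x + vbar0) := by
  have hσ0 : σ ≠ 0 := hσ.ne'
  -- abstract D := Ω⁻¹ and H1 := σ⁻¹ • D + V'
  obtain ⟨D, hDdef⟩ : ∃ D', Ω⁻¹ = D' := ⟨Ω⁻¹, rfl⟩
  rw [hDdef] at hG hvbar0 hH1pd
  obtain ⟨H1, hH1def⟩ : ∃ H1', σ⁻¹ • D + V' = H1' := ⟨_, rfl⟩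
  rw [hH1def] at hH1pd
  have hVD : V' + σ⁻¹ • D = H1 := by rw [← hH1def, add_comm]
  rw [hVD] at hvbar0
  have hΩD : Ω * D = 1 := by rw [← hDdef]; exact Matrix.mul_nonsing_inv Ω (pd_unit hΩ)
  have hDΩ : D * Ω = 1 := by rw [← hDdef]; exact Matrix.nonsing_inv_mul Ω (pd_unit hΩ)
  have hDs : Dᵀ = D := by
    rw [← hDdef, Matrix.transpose_nonsing_inv, pd_symm hΩ]
  have hH1d : H1 = σ⁻¹ • D + V' := hH1def.symm
  have hH1u : IsUnit H1.det := pd_unit hH1pd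
  have hH1is : (H1⁻¹)ᵀ = H1⁻¹ := by
    rw [Matrix.transpose_nonsing_inv, pd_symm hH1pd]
  have hQuuis : (Quu⁻¹)ᵀ = Quu⁻¹ := by
    rw [Matrix.transpose_nonsing_inv, pd_symm hQuu_pd]
  have I2 : σ⁻¹ • (D * H1⁻¹) = 1 - σ • (M * Ω) := idI2 hσ hΩD hDΩ hV'u hH1d hH1u hM
  have I1 : (σ⁻¹ * σ⁻¹) • (D * (H1⁻¹ * D)) = σ⁻¹ • D - M := idI1 hσ hΩD hDΩ hV'u hH1d hH1u hM
  -- local abbreviations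
  set L : (Fin p → ℝ) → ℝ := fun δu => (1/2) * (x ⬝ᵥ lxx *ᵥ x) + δu ⬝ᵥ lux *ᵥ x
      + (1/2) * (δu ⬝ᵥ luu *ᵥ δu) + lx ⬝ᵥ x + lu ⬝ᵥ δu with hL
  set c : (Fin p → ℝ) → (Fin n → ℝ) := fun δu => A *ᵥ x + B *ᵥ δu + f with hc
  set b1 : (Fin p → ℝ) → (Fin n → ℝ) := fun δu => v' - σ⁻¹ • (D *ᵥ c δu) with hb1
  set r0 : Fin p → ℝ := Qux *ᵥ x + Qu with hr0
  set C0 : ℝ := 2⁻¹ * (x ⬝ᵥ Qxx *ᵥ x) + Qx ⬝ᵥ x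
      + (vbar' + f ⬝ᵥ N + 2⁻¹ * (f ⬝ᵥ M *ᵥ f) - 2⁻¹ * (v' ⬝ᵥ H1⁻¹ *ᵥ v')) with hC0
  -- the inner quadratic form in x'
  have key1 : ∀ δu x', G (δu, x') = 2⁻¹ * (x' ⬝ᵥ H1 *ᵥ x') + b1 δu ⬝ᵥ x'
      + (L δu + (2*σ)⁻¹ * (c δu ⬝ᵥ D *ᵥ c δu) + vbar') := by
    intro δu x'
    rw [hG]
    have hsub : x' - A *ᵥ x - B *ᵥ δu - f = x' - c δu := by
      simp only [hc]
      abel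
    rw [hsub]
    have h2 : c δu ⬝ᵥ D *ᵥ x' = (D *ᵥ c δu) ⬝ᵥ x' := by rw [dot_shift, hDs]
    have h3 : x' ⬝ᵥ D *ᵥ c δu = (D *ᵥ c δu) ⬝ᵥ x' := by rw [dot_sym_s13 hDs, h2]
    have e1 : (x' - c δu) ⬝ᵥ D *ᵥ (x' - c δu)
        = x' ⬝ᵥ D *ᵥ x' - 2 * ((D *ᵥ c δu) ⬝ᵥ x') + c δu ⬝ᵥ D *ᵥ c δu := by
      simp only [Matrix.mulVec_sub, dotProduct_sub, sub_dotProduct]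
      rw [h2, h3]
      ring
    have e2 : x' ⬝ᵥ H1 *ᵥ x' = σ⁻¹ * (x' ⬝ᵥ D *ᵥ x') + x' ⬝ᵥ V' *ᵥ x' := by
      rw [hH1d, Matrix.add_mulVec, dotProduct_add, smul_mulVec, dotProduct_smul,
        smul_eq_mul]
    have e3 : b1 δu ⬝ᵥ x' = v' ⬝ᵥ x' - σ⁻¹ * ((D *ᵥ c δu) ⬝ᵥ x') := by
      rw [hb1]
      simp only [sub_dotProduct, smul_dotProduct, smul_eq_mul]
    rw [e1, e2, e3, hL, mul_inv]
    ring
  -- inner lower bound and attainment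
  have inner_lb : ∀ δu x', (L δu + (2*σ)⁻¹ * (c δu ⬝ᵥ D *ᵥ c δu) + vbar')
      - 2⁻¹ * (b1 δu ⬝ᵥ H1⁻¹ *ᵥ b1 δu) ≤ G (δu, x') := by
    intro δu x'
    rw [key1]
    exact quad_lb hH1pd _ _ x'
  have inner_eq : ∀ δu, G (δu, -(H1⁻¹ *ᵥ b1 δu))
      = (L δu + (2*σ)⁻¹ * (c δu ⬝ᵥ D *ᵥ c δu) + vbar')
        - 2⁻¹ * (b1 δu ⬝ᵥ H1⁻¹ *ᵥ b1 δu) := by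
    intro δu
    rw [key1]
    exact quad_min hH1pd _ _
  -- the inner minimum as a quadratic in δu
  have claim2 : ∀ δu, (L δu + (2*σ)⁻¹ * (c δu ⬝ᵥ D *ᵥ c δu) + vbar')
      - 2⁻¹ * (b1 δu ⬝ᵥ H1⁻¹ *ᵥ b1 δu)
      = 2⁻¹ * (δu ⬝ᵥ Quu *ᵥ δu) + r0 ⬝ᵥ δu + C0 := by
    intro δu
    -- cross term
    have ecross : (σ⁻¹ • (D *ᵥ c δu)) ⬝ᵥ H1⁻¹ *ᵥ v' = c δu ⬝ᵥ N := by
      have s1 : (D *ᵥ c δu) ⬝ᵥ H1⁻¹ *ᵥ v' = c δu ⬝ᵥ (D * H1⁻¹) *ᵥ v' := by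
        rw [mv_dot, hDs, Matrix.mulVec_mulVec]
      rw [smul_dotProduct, smul_eq_mul, s1, hN, dotProduct_sub, dotProduct_smul,
        smul_eq_mul]
      have s2 : σ⁻¹ * (c δu ⬝ᵥ (D * H1⁻¹) *ᵥ v') = c δu ⬝ᵥ (σ⁻¹ • (D * H1⁻¹)) *ᵥ v' := by
        rw [smul_mulVec, dotProduct_smul, smul_eq_mul]
      rw [s2, I2, Matrix.sub_mulVec, Matrix.one_mulVec, dotProduct_sub,
        smul_mulVec, dotProduct_smul, smul_eq_mul]
    -- squared term
    have equadsq : (σ⁻¹ • (D *ᵥ c δu)) ⬝ᵥ H1⁻¹ *ᵥ (σ⁻¹ • (D *ᵥ c δu))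
        = σ⁻¹ * (c δu ⬝ᵥ D *ᵥ c δu) - c δu ⬝ᵥ M *ᵥ c δu := by
      have s1 : (D *ᵥ c δu) ⬝ᵥ H1⁻¹ *ᵥ (D *ᵥ c δu)
          = c δu ⬝ᵥ (D * (H1⁻¹ * D)) *ᵥ c δu := by
        rw [mv_dot, hDs, Matrix.mulVec_mulVec, Matrix.mulVec_mulVec, Matrix.mul_assoc]
      have s2 : (σ⁻¹ • (D *ᵥ c δu)) ⬝ᵥ H1⁻¹ *ᵥ (σ⁻¹ • (D *ᵥ c δu))
          = (σ⁻¹ * σ⁻¹) * ((D *ᵥ c δu) ⬝ᵥ H1⁻¹ *ᵥ (D *ᵥ c δu)) := by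
        rw [Matrix.mulVec_smul, smul_dotProduct, dotProduct_smul, smul_eq_mul, smul_eq_mul]
        ring
      have s3 : (σ⁻¹ * σ⁻¹) * (c δu ⬝ᵥ (D * (H1⁻¹ * D)) *ᵥ c δu)
          = c δu ⬝ᵥ ((σ⁻¹ * σ⁻¹) • (D * (H1⁻¹ * D))) *ᵥ c δu := by
        rw [smul_mulVec, dotProduct_smul, smul_eq_mul]
      rw [s2, s1, s3, I1, Matrix.sub_mulVec, dotProduct_sub, smul_mulVec,
        dotProduct_smul, smul_eq_mul]
    -- expansion of the b1 quadratic
    have eb1 : b1 δu ⬝ᵥ H1⁻¹ *ᵥ b1 δu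
        = v' ⬝ᵥ H1⁻¹ *ᵥ v' - 2 * ((σ⁻¹ • (D *ᵥ c δu)) ⬝ᵥ H1⁻¹ *ᵥ v')
          + (σ⁻¹ • (D *ᵥ c δu)) ⬝ᵥ H1⁻¹ *ᵥ (σ⁻¹ • (D *ᵥ c δu)) := by
      rw [hb1]
      simp only [Matrix.mulVec_sub, dotProduct_sub, sub_dotProduct]
      rw [dot_sym_s13 hH1is v' (σ⁻¹ • (D *ᵥ c δu))]
      ring
    -- expansions in δu and x
    have ecMc : c δu ⬝ᵥ M *ᵥ c δu
        = x ⬝ᵥ (Aᵀ * M * A) *ᵥ x + δu ⬝ᵥ (Bᵀ * M * B) *ᵥ δu + f ⬝ᵥ M *ᵥ f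
          + 2 * (δu ⬝ᵥ (Bᵀ * M * A) *ᵥ x) + 2 * (x ⬝ᵥ (Aᵀ *ᵥ (M *ᵥ f)))
          + 2 * (δu ⬝ᵥ (Bᵀ *ᵥ (M *ᵥ f))) := by
      rw [hc]
      rw [dot_expand3 hMs (A *ᵥ x) (B *ᵥ δu) f]
      have t1 : (A *ᵥ x) ⬝ᵥ M *ᵥ (A *ᵥ x) = x ⬝ᵥ (Aᵀ * M * A) *ᵥ x := by
        rw [mv_dot, Matrix.mulVec_mulVec, Matrix.mulVec_mulVec, Matrix.mul_assoc]
      have t2 : (B *ᵥ δu) ⬝ᵥ M *ᵥ (B *ᵥ δu) = δu ⬝ᵥ (Bᵀ * M * B) *ᵥ δu := by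
        rw [mv_dot, Matrix.mulVec_mulVec, Matrix.mulVec_mulVec, Matrix.mul_assoc]
      have t3 : (B *ᵥ δu) ⬝ᵥ M *ᵥ (A *ᵥ x) = δu ⬝ᵥ (Bᵀ * M * A) *ᵥ x := by
        rw [mv_dot, Matrix.mulVec_mulVec, Matrix.mulVec_mulVec, Matrix.mul_assoc]
      have t4 : (A *ᵥ x) ⬝ᵥ M *ᵥ f = x ⬝ᵥ (Aᵀ *ᵥ (M *ᵥ f)) := by
        rw [mv_dot]
      have t5 : (B *ᵥ δu) ⬝ᵥ M *ᵥ f = δu ⬝ᵥ (Bᵀ *ᵥ (M *ᵥ f)) := by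
        rw [mv_dot]
      rw [t1, t2, t3, t4, t5]
    have ecN : c δu ⬝ᵥ N = x ⬝ᵥ (Aᵀ *ᵥ N) + δu ⬝ᵥ (Bᵀ *ᵥ N) + f ⬝ᵥ N := by
      rw [hc]
      simp only [add_dotProduct]
      rw [mv_dot A x N, mv_dot B δu N]
    have eQuu : δu ⬝ᵥ Quu *ᵥ δu = δu ⬝ᵥ luu *ᵥ δu + δu ⬝ᵥ (Bᵀ * M * B) *ᵥ δu := by
      rw [hQuu, Matrix.add_mulVec, dotProduct_add]
    have er0 : r0 ⬝ᵥ δu = δu ⬝ᵥ lux *ᵥ x + δu ⬝ᵥ (Bᵀ * M * A) *ᵥ x + lu ⬝ᵥ δu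
        + δu ⬝ᵥ (Bᵀ *ᵥ N) + δu ⬝ᵥ (Bᵀ *ᵥ (M *ᵥ f)) := by
      rw [hr0, hQux, hQu, Matrix.add_mulVec, add_dotProduct, add_dotProduct,
        add_dotProduct, add_dotProduct]
      rw [dotProduct_comm (lux *ᵥ x) δu, dotProduct_comm ((Bᵀ * M * A) *ᵥ x) δu,
        dotProduct_comm (Bᵀ *ᵥ N) δu, dotProduct_comm (Bᵀ *ᵥ (M *ᵥ f)) δu]
      ring
    have eQxx : x ⬝ᵥ Qxx *ᵥ x = x ⬝ᵥ lxx *ᵥ x + x ⬝ᵥ (Aᵀ * M * A) *ᵥ x := by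
      rw [hQxx, Matrix.add_mulVec, dotProduct_add]
    have eQx : Qx ⬝ᵥ x = lx ⬝ᵥ x + x ⬝ᵥ (Aᵀ *ᵥ (M *ᵥ f)) + x ⬝ᵥ (Aᵀ *ᵥ N) := by
      rw [hQx, add_dotProduct, add_dotProduct, dotProduct_comm (Aᵀ *ᵥ (M *ᵥ f)) x,
        dotProduct_comm (Aᵀ *ᵥ N) x]
    have ecNcomm : c δu ⬝ᵥ N = N ⬝ᵥ c δu := dotProduct_comm _ _
    have efN : f ⬝ᵥ N = f ⬝ᵥ N := rfl
    rw [eb1, ecross, equadsq, hL, hC0, eQuu, er0, eQxx, eQx, ecMc, ecN, mul_inv]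
    ring
  -- outer step
  have claimZ : C0 - 2⁻¹ * (r0 ⬝ᵥ Quu⁻¹ *ᵥ r0)
      = (1/2) * (x ⬝ᵥ V0 *ᵥ x) + v0 ⬝ᵥ x + vbar0 := by
    have e1 : r0 ⬝ᵥ Quu⁻¹ *ᵥ r0
        = x ⬝ᵥ (Quxᵀ * Quu⁻¹ * Qux) *ᵥ x + Qu ⬝ᵥ Quu⁻¹ *ᵥ Qu
          + 2 * (x ⬝ᵥ ((Quxᵀ * Quu⁻¹) *ᵥ Qu)) := by
      rw [hr0, dot_expand2 hQuuis (Qux *ᵥ x) Qu]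
      have t1 : (Qux *ᵥ x) ⬝ᵥ Quu⁻¹ *ᵥ (Qux *ᵥ x) = x ⬝ᵥ (Quxᵀ * Quu⁻¹ * Qux) *ᵥ x := by
        rw [mv_dot, Matrix.mulVec_mulVec, Matrix.mulVec_mulVec, Matrix.mul_assoc]
      have t2 : (Qux *ᵥ x) ⬝ᵥ Quu⁻¹ *ᵥ Qu = x ⬝ᵥ ((Quxᵀ * Quu⁻¹) *ᵥ Qu) := by
        rw [mv_dot, Matrix.mulVec_mulVec]
      rw [t1, t2]
    rw [e1, hC0, hV0, hv0, hvbar0]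
    rw [Matrix.sub_mulVec, dotProduct_sub, sub_dotProduct,
      dotProduct_comm ((Quxᵀ * Quu⁻¹) *ᵥ Qu) x]
    ring
  -- assemble
  constructor
  · refine ⟨(-(Quu⁻¹ *ᵥ r0), -(H1⁻¹ *ᵥ b1 (-(Quu⁻¹ *ᵥ r0)))), ?_⟩
    calc G (-(Quu⁻¹ *ᵥ r0), -(H1⁻¹ *ᵥ b1 (-(Quu⁻¹ *ᵥ r0))))
        = 2⁻¹ * ((-(Quu⁻¹ *ᵥ r0)) ⬝ᵥ Quu *ᵥ (-(Quu⁻¹ *ᵥ r0)))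
            + r0 ⬝ᵥ (-(Quu⁻¹ *ᵥ r0)) + C0 := by
          rw [inner_eq, claim2]
      _ = C0 - 2⁻¹ * (r0 ⬝ᵥ Quu⁻¹ *ᵥ r0) := quad_min hQuu_pd r0 C0
      _ = (1/2) * (x ⬝ᵥ V0 *ᵥ x) + v0 ⬝ᵥ x + vbar0 := claimZ
  · rintro z ⟨⟨δu, x'⟩, rfl⟩
    calc (1/2) * (x ⬝ᵥ V0 *ᵥ x) + v0 ⬝ᵥ x + vbar0
        = C0 - 2⁻¹ * (r0 ⬝ᵥ Quu⁻¹ *ᵥ r0) := claimZ.symm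
      _ ≤ 2⁻¹ * (δu ⬝ᵥ Quu *ᵥ δu) + r0 ⬝ᵥ δu + C0 := quad_lb hQuu_pd r0 C0 δu
      _ = (L δu + (2*σ)⁻¹ * (c δu ⬝ᵥ D *ᵥ c δu) + vbar')
            - 2⁻¹ * (b1 δu ⬝ᵥ H1⁻¹ *ᵥ b1 δu) := (claim2 δu).symm
      _ ≤ G (δu, x') := inner_lb δu x'

lemma symm_M {n : ℕ} {σ : ℝ} {Ω V' M : Matrix (Fin n) (Fin n) ℝ} (hΩs : Ωᵀ = Ω)
    (hV's : V'ᵀ = V') (hM : M = (σ • Ω + V'⁻¹)⁻¹) : Mᵀ = M := by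
  rw [hM, Matrix.transpose_nonsing_inv, Matrix.transpose_add, Matrix.transpose_smul,
    hΩs, Matrix.transpose_nonsing_inv, hV's]

lemma sandwich_symm {k m : ℕ} (B : Matrix (Fin k) (Fin m) ℝ)
    {M : Matrix (Fin k) (Fin k) ℝ} (hMs : Mᵀ = M) : (Bᵀ * M * B)ᵀ = Bᵀ * M * B := by
  rw [Matrix.transpose_mul, Matrix.transpose_mul, Matrix.transpose_transpose, hMs,
    Matrix.mul_assoc]

/-- **Combined Theorems 1 and 2 of the paper: the full backward induction for the future
stress.** For the linearized risk-sensitive problem with deviation dynamics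
`x' = A(t) x + B(t) δu + f̄(t+1) + ω` and σ-scaled noise penalties, the future stress
`F_t(x)` (defined by backward infimization over controls and next states) is, under the
stated invertibility/positive-definiteness conditions along the Riccati-type recursion,
an explicit quadratic `(1/2) xᵀ V(t) x + v(t)ᵀ x + v̄(t)`, and each infimum is attained. -/
theorem future_stress_backward_induction
    (n p T : ℕ) (hn : 0 < n) (hp : 0 < p) (hT : 1 ≤ T) (σ : ℝ) (hσ : 0 < σ)
    (A : ℕ → Matrix (Fin n) (Fin n) ℝ) (B : ℕ → Matrix (Fin n) (Fin p) ℝ)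
    (fbar : ℕ → (Fin n → ℝ))
    (Ω : ℕ → Matrix (Fin n) (Fin n) ℝ) (hΩ_pd : ∀ t < T, (Ω (t+1)).PosDef)
    (lxx : ℕ → Matrix (Fin n) (Fin n) ℝ) (hlxx_symm : ∀ t ≤ T, (lxx t).IsSymm)
    (lux : ℕ → Matrix (Fin p) (Fin n) ℝ)
    (luu : ℕ → Matrix (Fin p) (Fin p) ℝ) (hluu_symm : ∀ t < T, (luu t).IsSymm)
    (lx : ℕ → (Fin n → ℝ)) (lu : ℕ → (Fin p → ℝ))
    -- the quadratic running cost `l_t`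
    (l : ℕ → (Fin n → ℝ) → (Fin p → ℝ) → ℝ)
    (hl : ∀ t < T, ∀ (δx : Fin n → ℝ) (δu : Fin p → ℝ),
        l t δx δu = (1/2) * (δx ⬝ᵥ lxx t *ᵥ δx) + δu ⬝ᵥ lux t *ᵥ δx
          + (1/2) * (δu ⬝ᵥ luu t *ᵥ δu) + lx t ⬝ᵥ δx + lu t ⬝ᵥ δu)
    -- the future stress `F`, and the one-step objective `g` whose infimum over
    -- `(δu, x')` defines `F_t` backward
    (F : ℕ → (Fin n → ℝ) → ℝ)
    (g : ℕ → (Fin n → ℝ) → ((Fin p → ℝ) × (Fin n → ℝ)) → ℝ)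
    (hg : ∀ t < T, ∀ (x : Fin n → ℝ) (δu : Fin p → ℝ) (x' : Fin n → ℝ),
        g t x (δu, x') = l t x δu
          + (2*σ)⁻¹ * ((x' - A t *ᵥ x - B t *ᵥ δu - fbar (t+1)) ⬝ᵥ
              (Ω (t+1))⁻¹ *ᵥ (x' - A t *ᵥ x - B t *ᵥ δu - fbar (t+1)))
          + F (t+1) x')
    (hFT : ∀ x, F T x = (1/2) * (x ⬝ᵥ lxx T *ᵥ x) + lx T ⬝ᵥ x)
    (hFt : ∀ t < T, ∀ x, F t x = ⨅ q : (Fin p → ℝ) × (Fin n → ℝ), g t x q)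
    -- the backward Riccati-type recursion
    (V : ℕ → Matrix (Fin n) (Fin n) ℝ) (v : ℕ → (Fin n → ℝ)) (vbar : ℕ → ℝ)
    (M : ℕ → Matrix (Fin n) (Fin n) ℝ) (N : ℕ → (Fin n → ℝ))
    (Qx : ℕ → (Fin n → ℝ)) (Qu : ℕ → (Fin p → ℝ))
    (Quu : ℕ → Matrix (Fin p) (Fin p) ℝ) (Qux : ℕ → Matrix (Fin p) (Fin n) ℝ)
    (Qxx : ℕ → Matrix (Fin n) (Fin n) ℝ)
    (hVT : V T = lxx T) (hvT : v T = lx T) (hvbarT : vbar T = 0)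
    (hM : ∀ t < T, M t = (σ • Ω (t+1) + (V (t+1))⁻¹)⁻¹)
    (hN : ∀ t < T, N t = v (t+1) - σ • ((M t * Ω (t+1)) *ᵥ v (t+1)))
    (hQx : ∀ t < T, Qx t = lx t + (A t)ᵀ *ᵥ (M t *ᵥ fbar (t+1)) + (A t)ᵀ *ᵥ N t)
    (hQu : ∀ t < T, Qu t = lu t + (B t)ᵀ *ᵥ N t + (B t)ᵀ *ᵥ (M t *ᵥ fbar (t+1)))
    (hQuu : ∀ t < T, Quu t = luu t + (B t)ᵀ * M t * B t)
    (hQux : ∀ t < T, Qux t = lux t + (B t)ᵀ * M t * A t)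
    (hQxx : ∀ t < T, Qxx t = lxx t + (A t)ᵀ * M t * A t)
    (hV : ∀ t < T, V t = Qxx t - (Qux t)ᵀ * (Quu t)⁻¹ * Qux t)
    (hv : ∀ t < T, v t = Qx t - ((Qux t)ᵀ * (Quu t)⁻¹) *ᵥ Qu t)
    (hvbar : ∀ t < T, vbar t = vbar (t+1) + fbar (t+1) ⬝ᵥ N t
        + (1/2) * (fbar (t+1) ⬝ᵥ M t *ᵥ fbar (t+1))
        - (1/2) * (v (t+1) ⬝ᵥ (V (t+1) + σ⁻¹ • (Ω (t+1))⁻¹)⁻¹ *ᵥ v (t+1))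
        - (1/2) * (Qu t ⬝ᵥ (Quu t)⁻¹ *ᵥ Qu t))
    -- the well-posedness conditions along the recursion
    (hV_inv : ∀ t < T, IsUnit (V (t+1)).det)
    (hV_pd : ∀ t < T, (σ⁻¹ • (Ω (t+1))⁻¹ + V (t+1)).PosDef)
    (hQuu_pd : ∀ t < T, (Quu t).PosDef) :
    ∀ t ≤ T, ∀ x : Fin n → ℝ,
      F t x = (1/2) * (x ⬝ᵥ V t *ᵥ x) + v t ⬝ᵥ x + vbar t ∧
      (t < T → IsLeast (Set.range (g t x)) (F t x)) := by

  suffices key : ∀ d t, t + d = T →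
      ((V t)ᵀ = V t ∧ ∀ x : Fin n → ℝ,
        F t x = (1/2) * (x ⬝ᵥ V t *ᵥ x) + v t ⬝ᵥ x + vbar t ∧
        (t < T → IsLeast (Set.range (g t x)) (F t x))) by
    intro t ht x
    exact (key (T - t) t (by omega)).2 x
  intro d
  induction d with
  | zero =>
    intro t ht
    have hteq : t = T := by omega
    subst hteq
    refine ⟨?_, ?_⟩
    · rw [hVT]
      exact (hlxx_symm t le_rfl).eq
    · intro x
      constructor
      · rw [hFT x, hVT, hvT, hvbarT]; ring
      · intro h; exact absurd h (lt_irrefl t)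
  | succ d ih =>
    intro t ht
    have htT : t < T := by omega
    obtain ⟨ihs, ihF⟩ := ih (t+1) (by omega)
    have hΩs : (Ω (t+1))ᵀ = Ω (t+1) := pd_symm (hΩ_pd t htT)
    have hMs : (M t)ᵀ = M t := symm_M hΩs ihs (hM t htT)
    have hQuuis : ((Quu t)⁻¹)ᵀ = (Quu t)⁻¹ := by
      rw [Matrix.transpose_nonsing_inv, pd_symm (hQuu_pd t htT)]
    have hVs : (V t)ᵀ = V t := by
      rw [hV t htT, Matrix.transpose_sub, hQxx t htT, Matrix.transpose_add,
        (hlxx_symm t htT.le).eq, sandwich_symm (A t) hMs, sandwich_symm (Qux t) hQuuis,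
        ← hQxx t htT]
    refine ⟨hVs, ?_⟩
    intro x
    have hle : IsLeast (Set.range (g t x))
        ((1/2) * (x ⬝ᵥ V t *ᵥ x) + v t ⬝ᵥ x + vbar t) := by
      apply step_isLeast hσ (A t) (B t) (fbar (t+1)) (Ω (t+1)) (hΩ_pd t htT)
        (lxx t) (lux t) (luu t) (lx t) (lu t) (V (t+1)) (hV_inv t htT)
        (v (t+1)) (vbar (t+1)) (hV_pd t htT)
        (M t) (hM t htT) hMs (N t) (hN t htT) (Qx t) (hQx t htT) (Qu t) (hQu t htT)
        (Quu t) (hQuu t htT) (hQuu_pd t htT) (Qux t) (hQux t htT) (Qxx t) (hQxx t htT)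
        (V t) (hV t htT) (v t) (hv t htT) (vbar t) (hvbar t htT) x (g t x)
      intro δu x'
      rw [hg t htT x δu x', hl t htT x δu, (ihF x').1]
    have hFeq : F t x = (1/2) * (x ⬝ᵥ V t *ᵥ x) + v t ⬝ᵥ x + vbar t := by
      rw [hFt t htT x, ← sInf_range]
      exact hle.csInf_eq
    exact ⟨hFeq, fun _ => hFeq ▸ hle⟩
end
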